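/- For every n ≥ 0, the map Δ_𝔑(∂Δⁿ) → Δ_𝔑ⁿ of simplicial categories induced by the boundary inclusion ∂Δⁿ → Δⁿ is a cofibration in sCat. -/

import Mathlib

open CategoryTheory Simplicial Opposite

/-- A (small) simplicially enriched category, presented level-wise. -/
structure SCat : Type 1 where
  Obj : Type
  Hom : Obj → Obj → SSet.{0}
  id : ∀ (x : Obj) (k : SimplexCategoryᵒᵖ), (Hom x x).obj k
  comp : ∀ {x y z : Obj} (k : SimplexCategoryᵒᵖ),
    (Hom x y).obj k → (Hom y z).obj k → (Hom x z).obj k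
  id_comp : ∀ {x y : Obj} (k) (f : (Hom x y).obj k), comp k (id x k) f = f
  comp_id : ∀ {x y : Obj} (k) (f : (Hom x y).obj k), comp k f (id y k) = f
  assoc : ∀ {w x y z : Obj} (k) (f : (Hom w x).obj k) (g : (Hom x y).obj k)
    (h : (Hom y z).obj k), comp k (comp k f g) h = comp k f (comp k g h)
  id_map : ∀ (x : Obj) {k l : SimplexCategoryᵒᵖ} (φ : k ⟶ l),
    (Hom x x).map φ (id x k) = id x l
  comp_map : ∀ {x y z : Obj} {k l : SimplexCategoryᵒᵖ} (φ : k ⟶ l)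
    (f : (Hom x y).obj k) (g : (Hom y z).obj k),
    (Hom x z).map φ (comp k f g) = comp l ((Hom x y).map φ f) ((Hom y z).map φ g)

/-- A simplicial (i.e. simplicially enriched) functor. -/
structure SFunctor (C D : SCat) : Type where
  obj : C.Obj → D.Obj
  map : ∀ {x y : C.Obj} (k : SimplexCategoryᵒᵖ),
    (C.Hom x y).obj k → (D.Hom (obj x) (obj y)).obj k
  map_id : ∀ (x : C.Obj) (k), map k (C.id x k) = D.id (obj x) k
  map_comp : ∀ {x y z : C.Obj} (k) (f : (C.Hom x y).obj k) (g : (C.Hom y z).obj k),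
    map k (C.comp k f g) = D.comp k (map k f) (map k g)
  map_natural : ∀ {x y : C.Obj} {k l : SimplexCategoryᵒᵖ} (φ : k ⟶ l)
    (f : (C.Hom x y).obj k),
    map l ((C.Hom x y).map φ f) = (D.Hom (obj x) (obj y)).map φ (map k f)

namespace SFunctor

theorem ext' {C D : SCat} {F G : SFunctor C D} (h : F.obj = G.obj)
    (h' : ∀ (x y : C.Obj) (k) (f : (C.Hom x y).obj k),
      HEq (F.map (x := x) (y := y) k f) (G.map (x := x) (y := y) k f)) : F = G := by
  cases F with
  | mk Fo Fm _ _ _ =>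
    cases G with
    | mk Go Gm _ _ _ =>
      obtain rfl : Fo = Go := h
      obtain rfl : @Fm = @Gm := by
        funext x y k f
        exact eq_of_heq (h' x y k f)
      rfl

/-- The identity simplicial functor. -/
def id' (C : SCat) : SFunctor C C where
  obj := _root_.id
  map _ f := f
  map_id _ _ := rfl
  map_comp _ _ _ := rfl
  map_natural _ _ := rfl

/-- Composition of simplicial functors. -/
def comp' {C D E : SCat} (F : SFunctor C D) (G : SFunctor D E) : SFunctor C E where
  obj := G.obj ∘ F.obj
  map k f := G.map k (F.map k f)
  map_id x k := by show G.map k (F.map k (C.id x k)) = _; rw [F.map_id, G.map_id]; rfl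
  map_comp k f g := by show G.map k (F.map k (C.comp k f g)) = _; rw [F.map_comp, G.map_comp]
  map_natural φ f := by
    show G.map _ (F.map _ ((C.Hom _ _).map φ f)) = _
    rw [F.map_natural, G.map_natural]; rfl

end SFunctor

instance : Category.{0, 1} SCat where
  Hom := SFunctor
  id := SFunctor.id'
  comp F G := F.comp' G
  id_comp _ := rfl
  comp_id _ := rfl
  assoc _ _ _ := rfl
section Pi0

/-- Two vertices of a simplicial set related by an edge. -/
def edgeRel (X : SSet.{0}) (a b : X.obj (op ⦋0⦌)) : Prop :=
  ∃ e : X.obj (op ⦋1⦌), X.map (SimplexCategory.δ 1).op e = a ∧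
    X.map (SimplexCategory.δ 0).op e = b

/-- The set of connected components of a simplicial set. -/
def pi0 (X : SSet.{0}) : Type := Quot (edgeRel X)

lemma face_degen (X : SSet.{0}) (a : X.obj (op ⦋0⦌)) (i : Fin 2) :
    X.map (SimplexCategory.δ i).op (X.map (SimplexCategory.σ 0).op a) = a := by
  rw [← FunctorToTypes.map_comp_apply, ← op_comp]
  rw [show SimplexCategory.δ i ≫ SimplexCategory.σ 0 = 𝟙 (⦋0⦌ : SimplexCategory) from
    SimplexCategory.Hom.ext _ _ (OrderHom.ext _ _ (funext fun x => by
      have : Subsingleton (Fin (⦋0⦌.len + 1)) := by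
        rw [SimplexCategory.len_mk]; exact Fin.subsingleton_one
      exact Subsingleton.elim _ _))]
  simp

/-- Functoriality of `pi0`. -/
def pi0Map {X Y : SSet.{0}} (f : X ⟶ Y) : pi0 X → pi0 Y :=
  Quot.map (f.app _) (by
    rintro a b ⟨e, h1, h2⟩
    exact ⟨f.app _ e, by rw [← h1, FunctorToTypes.naturality],
      by rw [← h2, FunctorToTypes.naturality]⟩)

/-- The morphism of simplicial hom-sets induced by a simplicial functor. -/
def SFunctor.homNat {C D : SCat} (F : SFunctor C D) (x y : C.Obj) :
    C.Hom x y ⟶ D.Hom (F.obj x) (F.obj y) where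
  app k := ↾(F.map k)
  naturality k l φ := by
    ext a
    show F.map l ((C.Hom x y).map φ a) = (D.Hom (F.obj x) (F.obj y)).map φ (F.map k a)
    exact F.map_natural φ a

/-- The underlying type of the category `π₀ C` of a simplicial category `C`. -/
def SCat.Pi0 (C : SCat) : Type := C.Obj

instance SCat.pi0Category (C : SCat) : Category.{0, 0} (SCat.Pi0 C) where
  Hom x y := pi0 (C.Hom x y)
  id x := Quot.mk _ (C.id x (op ⦋0⦌))
  comp {x y z} f g := Quot.map₂ (C.comp (op ⦋0⦌))
    (by
      rintro a b₁ b₂ ⟨e, h1, h2⟩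
      refine ⟨C.comp (op ⦋1⦌) ((C.Hom x y).map (SimplexCategory.σ 0).op a) e, ?_, ?_⟩
      · erw [C.comp_map, face_degen, h1]
      · erw [C.comp_map, face_degen, h2])
    (by
      rintro a₁ a₂ b ⟨e, h1, h2⟩
      refine ⟨C.comp (op ⦋1⦌) e ((C.Hom y z).map (SimplexCategory.σ 0).op b), ?_, ?_⟩
      · erw [C.comp_map, face_degen, h1]
      · erw [C.comp_map, face_degen, h2]) f g
  id_comp {x y} f := by
    induction f using Quot.ind with
    | _ a => exact congrArg (Quot.mk _) (C.id_comp _ a)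
  comp_id {x y} f := by
    induction f using Quot.ind with
    | _ a => exact congrArg (Quot.mk _) (C.comp_id _ a)
  assoc {w x y z} f g h := by
    induction f using Quot.ind with
    | _ a =>
      induction g using Quot.ind with
      | _ b =>
        induction h using Quot.ind with
        | _ c => exact congrArg (Quot.mk _) (C.assoc _ a b c)

/-- The functor `π₀ C ⥤ π₀ D` induced by a simplicial functor. -/
def SFunctor.pi0Functor {C D : SCat} (F : SFunctor C D) : SCat.Pi0 C ⥤ SCat.Pi0 D where
  obj := F.obj
  map {x y} f := pi0Map (F.homNat x y) f
  map_id x := congrArg (Quot.mk _) (F.map_id x _)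
  map_comp {x y z} f g := by
    induction f using Quot.ind with
    | _ a =>
      induction g using Quot.ind with
      | _ b => exact congrArg (Quot.mk _) (F.map_comp _ a b)

end Pi0
section Homotopy
open CategoryTheory.Limits

/-- The constant map from `X` to `Δ[1]` at vertex `i`. -/
def constTo1 (X : SSet.{0}) (i : Fin 2) : X ⟶ Δ[1] where
  app k := ↾fun _ => SSet.stdSimplex.const 1 i k
  naturality k l φ := by ext a; rfl

lemma constTo1_natural {X Y : SSet.{0}} (f : X ⟶ Y) (i : Fin 2) :
    f ≫ constTo1 Y i = constTo1 X i := by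
  apply NatTrans.ext; funext k; ext a; rfl

/-- The inclusion of `X` into the cylinder `X ⨯ Δ[1]` at vertex `i`. -/
noncomputable def cylIns (X : SSet.{0}) (i : Fin 2) : X ⟶ X ⨯ Δ[1] :=
  prod.lift (𝟙 X) (constTo1 X i)

/-- Elementary simplicial homotopy relation between two maps of simplicial sets. -/
def SHomotopy {X Y : SSet.{0}} (f g : X ⟶ Y) : Prop :=
  ∃ H : X ⨯ Δ[1] ⟶ Y, cylIns X 0 ≫ H = f ∧ cylIns X 1 ≫ H = g

/-- The homotopy relation: equivalence relation generated by elementary homotopies. -/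
def SHomotopic {X Y : SSet.{0}} (f g : X ⟶ Y) : Prop :=
  Relation.EqvGen SHomotopy f g

/-- Simplicial homotopy equivalences of simplicial sets. -/
def IsHomotopyEquiv {X Y : SSet.{0}} (f : X ⟶ Y) : Prop :=
  ∃ g : Y ⟶ X, SHomotopic (f ≫ g) (𝟙 X) ∧ SHomotopic (g ≫ f) (𝟙 Y)

/-- Homotopy classes of maps of simplicial sets. -/
def htpyClasses (X K : SSet.{0}) : Type :=
  Quot (SHomotopy (X := X) (Y := K))

lemma cylIns_naturality {X Y : SSet.{0}} (f : X ⟶ Y) (i : Fin 2) :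
    cylIns X i ≫ prod.map f (𝟙 Δ[1]) = f ≫ cylIns Y i := by
  simp [cylIns, prod.comp_lift, constTo1_natural]

/-- Precomposition on homotopy classes. -/
noncomputable def htpyPrecomp {X Y : SSet.{0}} (f : X ⟶ Y) (K : SSet.{0}) :
    htpyClasses Y K → htpyClasses X K :=
  Quot.map (fun g => f ≫ g) (by
    rintro a b ⟨H, h0, h1⟩
    refine ⟨prod.map f (𝟙 _) ≫ H, ?_, ?_⟩
    · rw [← Category.assoc, cylIns_naturality, Category.assoc, h0]
    · rw [← Category.assoc, cylIns_naturality, Category.assoc, h1])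

/-- A map of simplicial sets is a weak homotopy equivalence iff it induces a bijection on
homotopy classes of maps into an arbitrary Kan complex. -/
def IsWeakHomotopyEquiv {X Y : SSet.{0}} (f : X ⟶ Y) : Prop :=
  ∀ K : SSet.{0}, SSet.KanComplex K → Function.Bijective (htpyPrecomp f K)

/-- Kan fibrations: right lifting property with respect to all horn inclusions. -/
def IsKanFibration {X Y : SSet.{0}} (p : X ⟶ Y) : Prop :=
  ∀ (n : ℕ) (i : Fin (n + 1)), HasLiftingProperty (SSet.horn n i).ι p

/-- The map of nerves induced by a functor. -/
def nerveMap' {A B : Type} [Category.{0} A] [Category.{0} B] (G : A ⥤ B) :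
    nerve A ⟶ nerve B :=
  nerveFunctor.map (X := Cat.of A) (Y := Cat.of B) G.toCatHom

end Homotopy

section Equivalences

/-- Weak equivalences of simplicial categories. -/
def SFunctor.IsWeakEquiv {C D : SCat} (F : SFunctor C D) : Prop :=
  IsHomotopyEquiv (nerveMap' F.pi0Functor) ∧
    ∀ x y : C.Obj, IsWeakHomotopyEquiv (F.homNat x y)

/-- Strong equivalences of simplicial categories. -/
def SFunctor.IsStrongEquiv {C D : SCat} (F : SFunctor C D) : Prop :=
  F.IsWeakEquiv ∧ F.pi0Functor.IsEquivalence

/-- Fibrant simplicial categories: all hom-simplicial sets are Kan complexes. -/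
def SCat.Fibrant (C : SCat) : Prop := ∀ x y : C.Obj, SSet.KanComplex (C.Hom x y)

/-- Weak groupoids: `π₀ C` is a groupoid. -/
def SCat.IsWeakGroupoid (C : SCat) : Prop :=
  ∀ (x y : C.Pi0) (f : x ⟶ y), IsIso f

/-- Fibrant groupoids. -/
def SCat.IsFibrantGroupoid (C : SCat) : Prop := C.Fibrant ∧ C.IsWeakGroupoid

/-- `0`-arrows of a simplicial category. -/
def SCat.hom₀ (C : SCat) (x y : C.Obj) : Type := (C.Hom x y).obj (op ⦋0⦌)

/-- A `0`-arrow is a homotopy equivalence if its class in `π₀ C` is an isomorphism. -/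
def SCat.IsHtpyEquivArrow (C : SCat) {x y : C.Obj} (α : C.hom₀ x y) : Prop :=
  IsIso (C := C.Pi0) (X := x) (Y := y) (Quot.mk _ α)

end Equivalences

section Cofibrations

/-- Right lifting property with respect to a class of maps. -/
def rlpOf {𝒞 : Type*} [Category 𝒞] (S : MorphismProperty 𝒞) : MorphismProperty 𝒞 :=
  fun _ _ p => ∀ {A B : 𝒞} (i : A ⟶ B), S i → HasLiftingProperty i p

/-- Left lifting property with respect to a class of maps. -/
def llpOf {𝒞 : Type*} [Category 𝒞] (T : MorphismProperty 𝒞) : MorphismProperty 𝒞 :=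
  fun _ _ i => ∀ {X Y : 𝒞} (p : X ⟶ Y), T p → HasLiftingProperty i p

/-- The constant simplicial set. -/
def constSSet (A : Type) : SSet.{0} := (Functor.const _).obj A

/-- The empty simplicial category. -/
def emptySCat : SCat where
  Obj := Empty
  Hom x _ := x.elim
  id x := x.elim
  comp {x} := x.elim
  id_comp {x} := x.elim
  comp_id {x} := x.elim
  assoc {x} := x.elim
  id_map x := x.elim
  comp_map {x} := x.elim

/-- The one-point simplicial category. -/
def ptSCat : SCat where
  Obj := PUnit
  Hom _ _ := constSSet PUnit
  id _ _ := PUnit.unit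
  comp _ _ _ := PUnit.unit
  id_comp _ _ := rfl
  comp_id _ _ := rfl
  assoc _ _ _ _ := rfl
  id_map := fun _ {_ _} _ => rfl
  comp_map := fun {_ _ _} {_ _} _ _ _ => rfl

/-- The unique simplicial functor from the empty simplicial category to the point. -/
def emptyToPt : emptySCat ⟶ ptSCat where
  obj x := x.elim
  map {x} := x.elim
  map_id x := x.elim
  map_comp {x} := x.elim
  map_natural {x} := x.elim

/-- Hom simplicial sets of the simplicial category `K₀₁`. -/
def K01Hom (K : SSet.{0}) : Bool → Bool → SSet.{0}
| false, false => constSSet PUnit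
| false, true  => K
| true,  false => constSSet Empty
| true,  true  => constSSet PUnit

/-- The simplicial category with two objects `0`, `1` and `Hom(0,1) = K`. -/
def K01 (K : SSet.{0}) : SCat where
  Obj := Bool
  Hom := K01Hom K
  id x k :=
    match x with
    | false => PUnit.unit
    | true => PUnit.unit
  comp {x y z} k f g :=
    match x, y, z, f, g with
    | false, false, false, _, _ => PUnit.unit
    | false, false, true,  _, g => g
    | false, true,  true,  f, _ => f
    | true,  true,  true,  _, _ => PUnit.unit
    | false, true,  false, _, g => Empty.elim g
    | true,  false, _,     f, _ => Empty.elim f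
    | true,  true,  false, _, g => Empty.elim g
  id_comp {x y} k f := by
    cases x <;> cases y <;> first | rfl | exact Empty.elim f
  comp_id {x y} k f := by
    cases x <;> cases y <;> first | rfl | exact Empty.elim f
  assoc {w x y z} k f g h := by
    cases w <;> cases x <;> cases y <;> cases z <;>
      first
        | rfl
        | exact Empty.elim f
        | exact Empty.elim g
        | exact Empty.elim h
  id_map := fun x {_ _} _ => by cases x <;> rfl
  comp_map {x y z} k l φ f g := by
    cases x <;> cases y <;> cases z <;>
      first
        | rfl
        | exact Empty.elim f
        | exact Empty.elim g

/-- The simplicial functor `K₀₁ → L₀₁` induced by a map `K ⟶ L`. -/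
def K01map {K L : SSet.{0}} (i : K ⟶ L) : K01 K ⟶ K01 L where
  obj := _root_.id
  map {x y} k f :=
    match x, y, f with
    | false, false, f => f
    | false, true,  f => i.app k f
    | true,  true,  f => f
    | true,  false, f => Empty.elim f
  map_id x k := by cases x <;> rfl
  map_comp {x y z} k f g := by
    cases x <;> cases y <;> cases z <;>
      first
        | rfl
        | exact Empty.elim f
        | exact Empty.elim g
  map_natural {x y} k l φ f := by
    cases x <;> cases y <;>
      first
        | rfl
        | exact congrArg (fun h => h f) (i.naturality φ)
        | exact Empty.elim f

/-- The generating cofibrations of `SCat`. -/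
def genCof : CategoryTheory.MorphismProperty SCat := fun _ _ u =>
  Nonempty (CategoryTheory.Arrow.mk u ≅ CategoryTheory.Arrow.mk emptyToPt) ∨
    ∃ (K L : SSet.{0}) (i : K ⟶ L), CategoryTheory.Mono i ∧
      Nonempty (CategoryTheory.Arrow.mk u ≅ CategoryTheory.Arrow.mk (K01map i))

/-- The cofibrations of `SCat`: the weakly saturated class generated by
the generating cofibrations, i.e. `llp (rlp (generators))`. -/
def Cofib : CategoryTheory.MorphismProperty SCat := llpOf (rlpOf genCof)

/-- The class of weak equivalences, as a morphism property. -/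
def WeakEq : CategoryTheory.MorphismProperty SCat := fun _ _ f => f.IsWeakEquiv

/-- The class of strong equivalences, as a morphism property. -/
def StrongEq : CategoryTheory.MorphismProperty SCat := fun _ _ f => f.IsStrongEquiv

end Cofibrations

section Model

/-- `f` is a retract of `g` in the arrow category. -/
def IsRetractOf {𝒞 : Type*} [Category 𝒞] {A B X Y : 𝒞} (f : A ⟶ B) (g : X ⟶ Y) : Prop :=
  ∃ (s : CategoryTheory.Arrow.mk f ⟶ CategoryTheory.Arrow.mk g)
    (r : CategoryTheory.Arrow.mk g ⟶ CategoryTheory.Arrow.mk f), s ≫ r = 𝟙 _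

/-- A model structure on a category, with prescribed classes of weak equivalences,
cofibrations and fibrations. -/
structure ModelStructure (𝒞 : Type*) [Category 𝒞]
    (W Cof Fib : CategoryTheory.MorphismProperty 𝒞) : Prop where
  weq_comp : ∀ {X Y Z : 𝒞} (f : X ⟶ Y) (g : Y ⟶ Z), W f → W g → W (f ≫ g)
  weq_of_postcomp : ∀ {X Y Z : 𝒞} (f : X ⟶ Y) (g : Y ⟶ Z), W g → W (f ≫ g) → W f
  weq_of_precomp : ∀ {X Y Z : 𝒞} (f : X ⟶ Y) (g : Y ⟶ Z), W f → W (f ≫ g) → W g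
  weq_retract : ∀ {A B X Y : 𝒞} (f : A ⟶ B) (g : X ⟶ Y), IsRetractOf f g → W g → W f
  cof_retract : ∀ {A B X Y : 𝒞} (f : A ⟶ B) (g : X ⟶ Y), IsRetractOf f g → Cof g → Cof f
  fib_retract : ∀ {A B X Y : 𝒞} (f : A ⟶ B) (g : X ⟶ Y), IsRetractOf f g → Fib g → Fib f
  lift_triv_cof : ∀ {A B X Y : 𝒞} (i : A ⟶ B) (p : X ⟶ Y),
    Cof i → W i → Fib p → HasLiftingProperty i p
  lift_triv_fib : ∀ {A B X Y : 𝒞} (i : A ⟶ B) (p : X ⟶ Y),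
    Cof i → Fib p → W p → HasLiftingProperty i p
  fact_triv_cof : ∀ {X Y : 𝒞} (f : X ⟶ Y), ∃ (Z : 𝒞) (i : X ⟶ Z) (p : Z ⟶ Y),
    Cof i ∧ W i ∧ Fib p ∧ i ≫ p = f
  fact_triv_fib : ∀ {X Y : 𝒞} (f : X ⟶ Y), ∃ (Z : 𝒞) (i : X ⟶ Z) (p : Z ⟶ Y),
    Cof i ∧ Fib p ∧ W p ∧ i ≫ p = f

end Model
section DeltaN

/-- The "gap" `(a,b) = {c | a < c < b}`. -/
def gapSet (n : ℕ) (a b : Fin (n + 1)) : Type :=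
  {c : Fin (n + 1) // a < c ∧ c < b}

instance (n : ℕ) (a b : Fin (n + 1)) : Fintype (gapSet n a b) := by
  unfold gapSet; infer_instance

/-- The constant `0` simplex of `Δ¹`. -/
def cst0 (k : SimplexCategoryᵒᵖ) : k.unop ⟶ (⦋1⦌ : SimplexCategory) :=
  SimplexCategory.const k.unop ⦋1⦌ 0

/-- The Hom simplicial set `I^{(a,b)}` of `Δ_𝔑ⁿ` (empty if `a > b`). -/
def DHom (n : ℕ) (a b : Fin (n + 1)) : SSet.{0} where
  obj k := PLift (a ≤ b) × (gapSet n a b → (k.unop ⟶ (⦋1⦌ : SimplexCategory)))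
  map φ := ↾fun f => ⟨f.1, fun c => φ.unop ≫ f.2 c⟩
  map_id k := by
    refine ConcreteCategory.hom_ext _ _ fun f => ?_; refine Prod.ext rfl ?_; funext c; simp
  map_comp φ ψ := by
    refine ConcreteCategory.hom_ext _ _ fun f => ?_; refine Prod.ext rfl ?_; funext c; simp

/-- Composition of arrows in `Δ_𝔑ⁿ`: insert the constant value `0` at the coordinate `b`. -/
def DCompFun {n : ℕ} {a b c : Fin (n + 1)} (k : SimplexCategoryᵒᵖ)
    (f2 : gapSet n a b → (k.unop ⟶ (⦋1⦌ : SimplexCategory)))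
    (g2 : gapSet n b c → (k.unop ⟶ (⦋1⦌ : SimplexCategory))) :
    gapSet n a c → (k.unop ⟶ (⦋1⦌ : SimplexCategory)) := fun x =>
  if h1 : x.1 < b then f2 ⟨x.1, x.2.1, h1⟩
  else if h2 : b < x.1 then g2 ⟨x.1, h2, x.2.2⟩
  else cst0 k

/-- The simplicial category `Δ_𝔑ⁿ`. -/
def DCat (n : ℕ) : SCat where
  Obj := Fin (n + 1)
  Hom := DHom n
  id a k := ⟨⟨le_refl a⟩, fun c => absurd (lt_trans c.2.1 c.2.2) (lt_irrefl a)⟩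
  comp {a b c} k f g := ⟨⟨f.1.down.trans g.1.down⟩, DCompFun k f.2 g.2⟩
  id_comp {a b} k f := by
    refine Prod.ext (Subsingleton.elim _ _) ?_
    funext c
    dsimp only
    unfold DCompFun
    rw [dif_neg (asymm c.2.1), dif_pos c.2.1]
    exact congrArg f.2 (Subtype.ext rfl)
  comp_id {a b} k f := by
    refine Prod.ext (Subsingleton.elim _ _) ?_
    funext c
    dsimp only
    unfold DCompFun
    rw [dif_pos c.2.2]
    exact congrArg f.2 (Subtype.ext rfl)
  assoc {w x y z} k f g h := by
    refine Prod.ext (Subsingleton.elim _ _) ?_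
    funext d
    have hxy := g.1.down
    dsimp only
    unfold DCompFun
    split_ifs <;>
      first
        | rfl
        | (exfalso; simp only [Fin.lt_def, Fin.le_def] at *; omega)
  id_map := fun a {_ _} φ => by
    refine Prod.ext rfl ?_
    funext c
    exact absurd (lt_trans c.2.1 c.2.2) (lt_irrefl a)
  comp_map := fun {a b c} {k l} φ f g => by
    refine Prod.ext rfl ?_
    funext x
    show φ.unop ≫ DCompFun k f.2 g.2 x = DCompFun l _ _ x
    unfold DCompFun
    split_ifs <;> rfl
end DeltaN
section DMapSec

/-- The map of cubes induced by a monotone map, on the level of hom-simplicial sets. -/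
def DMapHomFun {m n : SimplexCategory} (F : Fin (m.len + 1) →o Fin (n.len + 1))
    {a b : Fin (m.len + 1)} (k : SimplexCategoryᵒᵖ)
    (v : gapSet m.len a b → (k.unop ⟶ (⦋1⦌ : SimplexCategory)))
    (c : gapSet n.len (F a) (F b)) : k.unop ⟶ (⦋1⦌ : SimplexCategory) :=
  SimplexCategory.Hom.mk
    ⟨fun j => if ∀ x : gapSet m.len a b, F x.1 = c.1 → (v x).toOrderHom j = 1 then 1 else 0,
     by
      intro j j' hj
      dsimp only
      by_cases h1 : ∀ x : gapSet m.len a b, F x.1 = c.1 → (v x).toOrderHom j = 1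
      · rw [if_pos h1, if_pos]
        intro x hx
        have h3 := (v x).toOrderHom.monotone hj
        have h4 := h1 x hx
        have h5 := ((v x).toOrderHom j').isLt
        rw [Fin.ext_iff] at h4 ⊢
        rw [Fin.le_def] at h3
        simp only [Fin.val_one, SimplexCategory.len_mk] at *
        omega
      · rw [if_neg h1]
        exact Fin.zero_le _⟩


lemma DCompFun_lt {n : ℕ} {a b c : Fin (n + 1)} (k : SimplexCategoryᵒᵖ)
    (f2 : gapSet n a b → (k.unop ⟶ (⦋1⦌ : SimplexCategory)))
    (g2 : gapSet n b c → (k.unop ⟶ (⦋1⦌ : SimplexCategory)))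
    (x : gapSet n a c) (h : x.1 < b) :
    DCompFun k f2 g2 x = f2 ⟨x.1, x.2.1, h⟩ := by
  unfold DCompFun; rw [dif_pos h]

lemma DCompFun_gt {n : ℕ} {a b c : Fin (n + 1)} (k : SimplexCategoryᵒᵖ)
    (f2 : gapSet n a b → (k.unop ⟶ (⦋1⦌ : SimplexCategory)))
    (g2 : gapSet n b c → (k.unop ⟶ (⦋1⦌ : SimplexCategory)))
    (x : gapSet n a c) (h : b < x.1) :
    DCompFun k f2 g2 x = g2 ⟨x.1, h, x.2.2⟩ := by
  unfold DCompFun; rw [dif_neg (asymm h), dif_pos h]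

lemma DCompFun_mid {n : ℕ} {a b c : Fin (n + 1)} (k : SimplexCategoryᵒᵖ)
    (f2 : gapSet n a b → (k.unop ⟶ (⦋1⦌ : SimplexCategory)))
    (g2 : gapSet n b c → (k.unop ⟶ (⦋1⦌ : SimplexCategory)))
    (x : gapSet n a c) (h : x.1 = b) :
    DCompFun k f2 g2 x = cst0 k := by
  unfold DCompFun
  rw [dif_neg (by rw [h]; exact lt_irrefl _), dif_neg (by rw [h]; exact lt_irrefl _)]

/-- The simplicial functor `Δ_𝔑(f) : Δ_𝔑ᵐ → Δ_𝔑ⁿ` induced by `f : [m] → [n]`. -/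
def DMap {m n : SimplexCategory} (f : m ⟶ n) : SFunctor (DCat m.len) (DCat n.len) where
  obj := f.toOrderHom
  map {a b} k v := ⟨⟨f.toOrderHom.monotone v.1.down⟩, DMapHomFun f.toOrderHom k v.2⟩
  map_id a k := by
    refine Prod.ext (Subsingleton.elim _ _) ?_
    funext c
    exact absurd (lt_trans c.2.1 c.2.2) (lt_irrefl _)
  map_comp {a b c} k u v := by
    letI : ∀ a b : (DCat m.len).Obj, Fintype (gapSet m.len a b) := fun a b => instFintypeGapSet m.len a b
    refine Prod.ext (Subsingleton.elim _ _) ?_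
    funext x
    have hab := u.1.down
    have hbc := v.1.down
    dsimp only
    show DMapHomFun f.toOrderHom k (DCompFun k u.2 v.2) x =
      DCompFun k (DMapHomFun f.toOrderHom k u.2) (DMapHomFun f.toOrderHom k v.2) x
    rcases lt_trichotomy x.1 (f.toOrderHom b) with hx | hx | hx
    · rw [DCompFun_lt _ _ _ _ hx]
      apply SimplexCategory.Hom.ext _ _
      apply OrderHom.ext
      funext j
      refine if_congr ⟨?_, ?_⟩ rfl rfl
      · intro hc s hs
        have hsc : s.1 < c := lt_of_lt_of_le s.2.2 hbc
        have h0 := hc ⟨s.1, s.2.1, hsc⟩ hs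
        rw [DCompFun_lt k u.2 v.2 ⟨s.1, s.2.1, hsc⟩ s.2.2] at h0
        convert h0 using 3 <;> rfl
      · intro hc t ht
        have htb : t.1 < b := by
          by_contra hno
          have h1 : f.toOrderHom b ≤ f.toOrderHom t.1 := f.toOrderHom.monotone (not_lt.mp hno)
          rw [ht] at h1
          exact absurd hx (not_lt.mpr h1)
        rw [DCompFun_lt _ _ _ _ htb]
        exact hc ⟨t.1, t.2.1, htb⟩ ht
    · have hafb : f.toOrderHom a < f.toOrderHom b := by rw [← hx]; exact x.2.1
      have hfbc : f.toOrderHom b < f.toOrderHom c := by rw [← hx]; exact x.2.2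
      have hab' : @LT.lt (Fin (m.len + 1)) _ a b := by
        rcases lt_or_eq_of_le hab with h | h
        · exact h
        · rw [h] at hafb; exact absurd hafb (lt_irrefl _)
      have hbc' : @LT.lt (Fin (m.len + 1)) _ b c := by
        rcases lt_or_eq_of_le hbc with h | h
        · exact h
        · rw [h] at hfbc; exact absurd hfbc (lt_irrefl _)
      rw [DCompFun_mid _ _ _ _ hx]
      apply SimplexCategory.Hom.ext _ _
      apply OrderHom.ext
      funext j
      have hnot : ¬ ∀ t : gapSet m.len a c, f.toOrderHom t.1 = x.1 →
          (SimplexCategory.Hom.toOrderHom (DCompFun k u.2 v.2 t)) j = 1 := by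
        intro hcond
        have h0 := hcond ⟨b, hab', hbc'⟩ hx.symm
        rw [DCompFun_mid k u.2 v.2 ⟨b, hab', hbc'⟩ rfl] at h0
        have h1 : (SimplexCategory.Hom.toOrderHom (cst0 k)) j = 0 := rfl
        rw [h1] at h0
        have h2 := congrArg Fin.val h0
        simp [SimplexCategory.len_mk] at h2
      show (if ∀ t : gapSet m.len a c, f.toOrderHom t.1 = x.1 →
          (SimplexCategory.Hom.toOrderHom (DCompFun k u.2 v.2 t)) j = 1
        then (1 : Fin (⦋1⦌.len + 1)) else 0) = (SimplexCategory.Hom.toOrderHom (cst0 k)) j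
      rw [if_neg hnot]
      rfl
    · rw [DCompFun_gt _ _ _ _ hx]
      apply SimplexCategory.Hom.ext _ _
      apply OrderHom.ext
      funext j
      refine if_congr ⟨?_, ?_⟩ rfl rfl
      · intro hc s hs
        have hsa : @LT.lt (Fin (m.len + 1)) _ a s.1 := lt_of_le_of_lt hab s.2.1
        have h0 := hc ⟨s.1, hsa, s.2.2⟩ hs
        rw [DCompFun_gt k u.2 v.2 ⟨s.1, hsa, s.2.2⟩ s.2.1] at h0
        convert h0 using 3 <;> rfl
      · intro hc t ht
        have htb : @LT.lt (Fin (m.len + 1)) _ b t.1 := by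
          by_contra hno
          have h1 : f.toOrderHom t.1 ≤ f.toOrderHom b := f.toOrderHom.monotone (not_lt.mp hno)
          rw [ht] at h1
          exact absurd hx (not_lt.mpr h1)
        rw [DCompFun_gt _ _ _ _ htb]
        exact hc ⟨t.1, htb, t.2.2⟩ ht
  map_natural {a b} k l φ v := by
    refine Prod.ext rfl ?_
    funext c
    rfl

end DMapSec
section Cosimplicial

lemma fin2_ite_eq_one {P : Prop} [Decidable P] :
    ((if P then (1 : Fin ((⦋1⦌ : SimplexCategory).len + 1)) else 0) = 1) ↔ P := by
  split_ifs with h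
  · exact ⟨fun _ => h, fun _ => rfl⟩
  · refine ⟨fun h0 => ?_, fun hp => absurd hp h⟩
    have h2 := congrArg Fin.val h0
    simp [SimplexCategory.len_mk] at h2

lemma DMap_id (m : SimplexCategory) : DMap (𝟙 m) = SFunctor.id' (DCat m.len) := by
  letI : ∀ a b : (DCat m.len).Obj, Fintype (gapSet m.len a b) := fun a b => instFintypeGapSet m.len a b
  apply SFunctor.ext'
  · rfl
  · intro x y k v
    apply heq_of_eq
    refine Prod.ext (Subsingleton.elim _ _) ?_
    funext c
    apply SimplexCategory.Hom.ext _ _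
    apply OrderHom.ext
    funext j
    show (if ∀ t : gapSet m.len x y, (𝟙 m : m ⟶ m).toOrderHom t.1 = c.1 →
        (SimplexCategory.Hom.toOrderHom (v.2 t)) j = 1
      then (1 : Fin ((⦋1⦌ : SimplexCategory).len + 1)) else 0)
      = (SimplexCategory.Hom.toOrderHom (v.2 c)) j
    by_cases hv : (SimplexCategory.Hom.toOrderHom (v.2 c)) j = 1
    · rw [if_pos, hv]
      intro t ht
      have htc : t = c := Subtype.ext ht
      rw [htc]; exact hv
    · rw [if_neg]
      · have h2 := ((SimplexCategory.Hom.toOrderHom (v.2 c)) j).isLt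
        rw [Fin.ext_iff] at hv ⊢
        simp only [SimplexCategory.len_mk, Fin.val_one, Fin.val_zero] at *
        omega
      · intro hcond; exact hv (hcond c rfl)

lemma DMap_comp {l m n : SimplexCategory} (f : l ⟶ m) (g : m ⟶ n) :
    DMap (f ≫ g) = (DMap f).comp' (DMap g) := by
  letI : ∀ a b : (DCat l.len).Obj, Fintype (gapSet l.len a b) := fun a b => instFintypeGapSet l.len a b
  apply SFunctor.ext'
  · rfl
  · intro a b k v
    apply heq_of_eq
    refine Prod.ext (Subsingleton.elim _ _) ?_
    funext c
    apply SimplexCategory.Hom.ext _ _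
    apply OrderHom.ext
    funext j
    show (if ∀ t : gapSet l.len a b, (f ≫ g).toOrderHom t.1 = c.1 →
        (SimplexCategory.Hom.toOrderHom (v.2 t)) j = 1
      then (1 : Fin ((⦋1⦌ : SimplexCategory).len + 1)) else 0)
      = (if ∀ s : gapSet m.len (f.toOrderHom a) (f.toOrderHom b),
            g.toOrderHom s.1 = c.1 →
            (SimplexCategory.Hom.toOrderHom (DMapHomFun f.toOrderHom k v.2 s)) j = 1
         then (1 : Fin ((⦋1⦌ : SimplexCategory).len + 1)) else 0)
    refine if_congr ⟨?_, ?_⟩ rfl rfl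
    · intro hP s hs
      rw [show (SimplexCategory.Hom.toOrderHom (DMapHomFun f.toOrderHom k v.2 s)) j
          = (if ∀ t : gapSet l.len a b, f.toOrderHom t.1 = s.1 →
              (SimplexCategory.Hom.toOrderHom (v.2 t)) j = 1
             then (1 : Fin ((⦋1⦌ : SimplexCategory).len + 1)) else 0) from rfl,
        fin2_ite_eq_one]
      intro t ht
      refine hP t ?_
      show g.toOrderHom (f.toOrderHom t.1) = c.1
      rw [ht, hs]
    · intro hQ t ht
      have ht' : g.toOrderHom (f.toOrderHom t.1) = c.1 := ht
      have hfa : f.toOrderHom a < f.toOrderHom t.1 := by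
        rcases lt_or_eq_of_le (f.toOrderHom.monotone (le_of_lt t.2.1)) with h | h
        · exact h
        · exfalso
          have hc1 : g.toOrderHom (f.toOrderHom t.1) < c.1 := by
            rw [← h]; exact c.2.1
          rw [ht'] at hc1
          exact lt_irrefl _ hc1
      have hfb : f.toOrderHom t.1 < f.toOrderHom b := by
        rcases lt_or_eq_of_le (f.toOrderHom.monotone (le_of_lt t.2.2)) with h | h
        · exact h
        · exfalso
          have hc1 : c.1 < g.toOrderHom (f.toOrderHom t.1) := by
            rw [h]; exact c.2.2
          rw [ht'] at hc1
          exact lt_irrefl _ hc1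
      have h0 := hQ ⟨f.toOrderHom t.1, hfa, hfb⟩ ht'
      rw [show (SimplexCategory.Hom.toOrderHom
          (DMapHomFun f.toOrderHom k v.2 ⟨f.toOrderHom t.1, hfa, hfb⟩)) j
          = (if ∀ t' : gapSet l.len a b, f.toOrderHom t'.1 = f.toOrderHom t.1 →
              (SimplexCategory.Hom.toOrderHom (v.2 t')) j = 1
             then (1 : Fin ((⦋1⦌ : SimplexCategory).len + 1)) else 0) from rfl,
        fin2_ite_eq_one] at h0
      exact h0 t rfl

/-- The cosimplicial object `n ↦ Δ_𝔑ⁿ` in `SCat`. -/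
def DCatS : CategoryTheory.CosimplicialObject SCat where
  obj m := DCat m.len
  map f := DMap f
  map_id m := DMap_id m
  map_comp f g := DMap_comp f g

/-- The homotopy coherent nerve of a simplicial category. -/
def hcNerveObj (C : SCat) : SSet.{0} where
  obj k := SFunctor (DCat k.unop.len) C
  map φ := ↾fun F => (DMap φ.unop).comp' F
  map_id k := by
    ext F
    show (DMap (𝟙 k.unop)).comp' F = F
    rw [DMap_id]
    rfl
  map_comp {k l p} φ ψ := by
    ext F
    show (DMap (ψ.unop ≫ φ.unop)).comp' F = (DMap ψ.unop).comp' ((DMap φ.unop).comp' F)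
    rw [DMap_comp]
    rfl

/-- The homotopy coherent nerve functor `𝔑 : sCat → sSet`. -/
def hcNerve : SCat ⥤ SSet.{0} where
  obj := hcNerveObj
  map {C D} F :=
    { app := fun k => ↾fun G => G.comp' F
      naturality := fun k l φ => rfl }
  map_id C := by
    apply NatTrans.ext
    funext k; ext G
    show G.comp' (SFunctor.id' C) = G
    rfl
  map_comp F G := by
    apply NatTrans.ext
    funext k; ext H
    rfl

end Cosimplicial
section EcastHelpers

/-- Transport of an element of a hom-simplicial-set along equalities of objects. -/
def ecast {X : SCat} {x x' y y' : X.Obj} (hx : x = x') (hy : y = y')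
    {k : SimplexCategoryᵒᵖ} (f : (X.Hom x y).obj k) : (X.Hom x' y').obj k :=
  hx ▸ hy ▸ f

lemma ecast_self {X : SCat} {x y : X.Obj} (hx : x = x) (hy : y = y)
    {k : SimplexCategoryᵒᵖ} (f : (X.Hom x y).obj k) : ecast hx hy f = f := rfl

lemma ecast_heq {X : SCat} {x x' y y' : X.Obj} (hx : x = x') (hy : y = y')
    {k : SimplexCategoryᵒᵖ} (f : (X.Hom x y).obj k) : HEq (ecast hx hy f) f := by
  subst hx; subst hy; rfl

lemma ecast_eq_of_heq {X : SCat} {x x' y y' : X.Obj} (hx : x = x') (hy : y = y')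
    {k : SimplexCategoryᵒᵖ} {f : (X.Hom x y).obj k} {g : (X.Hom x' y').obj k}
    (h : HEq f g) : ecast hx hy f = g := by
  subst hx; subst hy; exact eq_of_heq h

lemma ecast_comp {X : SCat} {x x' y y' z z' : X.Obj} (hx : x = x') (hy : y = y')
    (hz : z = z') {k : SimplexCategoryᵒᵖ} (f : (X.Hom x y).obj k) (g : (X.Hom y z).obj k) :
    X.comp k (ecast hx hy f) (ecast hy hz g) = ecast hx hz (X.comp k f g) := by
  subst hx; subst hy; subst hz; rfl

lemma ecast_natural {X : SCat} {x x' y y' : X.Obj} (hx : x = x') (hy : y = y')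
    {k l : SimplexCategoryᵒᵖ} (θ : k ⟶ l) (f : (X.Hom x y).obj k) :
    (X.Hom x' y').map θ (ecast hx hy f) = ecast hx hy ((X.Hom x y).map θ f) := by
  subst hx; subst hy; rfl

lemma ecast_id {X : SCat} {x x' : X.Obj} (hx : x = x') (k : SimplexCategoryᵒᵖ) :
    ecast hx hx (X.id x k) = X.id x' k := by subst hx; rfl

lemma map_ecast {X Y : SCat} (p : SFunctor X Y) {x x' y y' : X.Obj} (hx : x = x')
    (hy : y = y') {k : SimplexCategoryᵒᵖ} (f : (X.Hom x y).obj k) :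
    p.map k (ecast hx hy f) = ecast (congrArg p.obj hx) (congrArg p.obj hy) (p.map k f) := by
  subst hx; subst hy; rfl

lemma map_heq_congr {X Y : SCat} (p : SFunctor X Y) {x x' y y' : X.Obj} (hx : x = x')
    (hy : y = y') {k : SimplexCategoryᵒᵖ} (f : (X.Hom x y).obj k) :
    HEq (p.map k (ecast hx hy f)) (p.map k f) := by
  subst hx; subst hy; rfl

lemma SFunctor.congr_obj {C D : SCat} {F G : SFunctor C D} (h : F = G) (x : C.Obj) :
    F.obj x = G.obj x := by subst h; rfl

lemma SFunctor.congr_map {C D : SCat} {F G : SFunctor C D} (h : F = G) (x y : C.Obj)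
    (k : SimplexCategoryᵒᵖ) (f : (C.Hom x y).obj k) :
    G.map k f = ecast (SFunctor.congr_obj h x) (SFunctor.congr_obj h y) (F.map k f) := by
  subst h; rfl

lemma SFunctor.ext'' {C D : SCat} {F G : SFunctor C D} (h : ∀ x, F.obj x = G.obj x)
    (h' : ∀ (x y : C.Obj) (k) (f : (C.Hom x y).obj k),
      ecast (h x) (h y) (F.map (x := x) (y := y) k f) = G.map k f) : F = G :=
  SFunctor.ext' (funext h) (fun x y k f =>
    (ecast_heq (h x) (h y) (F.map k f)).symm.trans (heq_of_eq (h' x y k f)))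

end EcastHelpers

section SimplexHelpers

open SimplexCategory

lemma shom_ext {x y : SimplexCategory} {f g : x ⟶ y}
    (h : ∀ i, f.toOrderHom i = g.toOrderHom i) : f = g :=
  SimplexCategory.Hom.ext _ _ (OrderHom.ext _ _ (funext h))

lemma comp_app {x y z : SimplexCategory} (f : x ⟶ y) (g : y ⟶ z) (i) :
    (f ≫ g).toOrderHom i = g.toOrderHom (f.toOrderHom i) := rfl

/-- The constant map to `1`. -/
def cst1 (k : SimplexCategoryᵒᵖ) : k.unop ⟶ (⦋1⦌ : SimplexCategory) :=
  SimplexCategory.const k.unop ⦋1⦌ 1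

lemma comp_cst0 {k l : SimplexCategoryᵒᵖ} (θ : k ⟶ l) : θ.unop ≫ cst0 k = cst0 l :=
  shom_ext (fun _ => rfl)

lemma comp_cst1 {k l : SimplexCategoryᵒᵖ} (θ : k ⟶ l) : θ.unop ≫ cst1 k = cst1 l :=
  shom_ext (fun _ => rfl)

lemma cst1_app (k : SimplexCategoryᵒᵖ) (j) : (cst1 k).toOrderHom j = 1 := rfl

lemma cst0_ne_cst1 (k : SimplexCategoryᵒᵖ) : cst0 k ≠ cst1 k := by
  intro h
  have := congrArg (fun f => (SimplexCategory.Hom.toOrderHom f) 0) h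
  simp only [cst0, cst1] at this
  exact absurd (congrArg Fin.val this) (by simp [SimplexCategory.const])

lemma fin2_ite (t : Fin (SimplexCategory.len ⦋1⦌ + 1)) :
    (if t = 1 then (1 : Fin (SimplexCategory.len ⦋1⦌ + 1)) else 0) = t := by
  revert t; decide

instance plift_subsingleton (p : Prop) : Subsingleton (PLift p) :=
  ⟨fun a b => by cases a; cases b; rfl⟩

lemma dhom_ext {n : ℕ} {a b : Fin (n + 1)} {k : SimplexCategoryᵒᵖ}
    {v w : (DHom n a b).obj k} (h : ∀ c, v.2 c = w.2 c) : v = w :=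
  Prod.ext (Subsingleton.elim _ _) (funext h)

lemma dhom_zero_subsingleton {k : SimplexCategoryᵒᵖ}
    (v w : (DHom 0 (0 : Fin 1) 0).obj k) : v = w :=
  dhom_ext (fun c => absurd (lt_trans c.2.1 c.2.2) (lt_irrefl _))

end SimplexHelpers
section PullPush

open SimplexCategory

lemma DMap_map_snd {m n : SimplexCategory} (φ : m ⟶ n) {a b : Fin (m.len + 1)}
    (k : SimplexCategoryᵒᵖ) (v : (DHom m.len a b).obj k) :
    ((DMap φ).map (x := a) (y := b) k v).2 = DMapHomFun φ.toOrderHom k v.2 := rfl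

lemma DMapHomFun_app {m n : SimplexCategory} (F : Fin (m.len + 1) →o Fin (n.len + 1))
    {a b : Fin (m.len + 1)} (k : SimplexCategoryᵒᵖ)
    (v : gapSet m.len a b → (k.unop ⟶ (⦋1⦌ : SimplexCategory)))
    (c : gapSet n.len (F a) (F b)) (j) :
    (SimplexCategory.Hom.toOrderHom (DMapHomFun F k v c)) j =
      if (∀ x : gapSet m.len a b, F x.1 = c.1 →
        (SimplexCategory.Hom.toOrderHom (v x)) j = 1) then 1 else 0 := rfl

lemma gap_pre {l m : SimplexCategory} (χ : l ⟶ m) (hs : StrictMono χ.toOrderHom)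
    {a₀ b₀ : Fin (l.len + 1)} {c : Fin (m.len + 1)} (h1 : χ.toOrderHom a₀ < c)
    (h2 : c < χ.toOrderHom b₀) {x} (hx : χ.toOrderHom x = c) : a₀ < x ∧ x < b₀ :=
  ⟨hs.lt_iff_lt.mp (by rw [hx]; exact h1), hs.lt_iff_lt.mp (by rw [hx]; exact h2)⟩

variable {N : ℕ} {m : SimplexCategory}

/-- The image of a gap element under a strictly monotone map. -/
def gapMap (φ : m ⟶ ⦋N⦌) (hs : StrictMono φ.toOrderHom) {a₀ b₀ : Fin (m.len + 1)}
    {a b : Fin (N + 1)} (ha : φ.toOrderHom a₀ = a) (hb : φ.toOrderHom b₀ = b)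
    (x : gapSet m.len a₀ b₀) : gapSet N a b :=
  ⟨φ.toOrderHom x.1, by subst ha; exact hs x.2.1, by subst hb; exact hs x.2.2⟩

/-- Restriction of a cube element along a strictly monotone map. -/
def pull (φ : m ⟶ ⦋N⦌) (hs : StrictMono φ.toOrderHom) {a₀ b₀ : Fin (m.len + 1)}
    {a b : Fin (N + 1)} (ha : φ.toOrderHom a₀ = a) (hb : φ.toOrderHom b₀ = b)
    {k : SimplexCategoryᵒᵖ} (v : (DHom N a b).obj k) : (DHom m.len a₀ b₀).obj k :=
  ⟨⟨by
      by_contra h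
      push_neg at h
      have h2 := hs h
      rw [ha, hb] at h2
      exact absurd v.1.down (not_le.mpr h2)⟩,
    fun x => v.2 (gapMap φ hs ha hb x)⟩

/-- `v` is supported on the image of `φ` : all coordinates outside the image are
constant at `1`. -/
def Supp (φ : m ⟶ ⦋N⦌) {a b : Fin (N + 1)} {k : SimplexCategoryᵒᵖ}
    (v : (DHom N a b).obj k) : Prop :=
  ∀ c : gapSet N a b, (∀ x : Fin (m.len + 1), φ.toOrderHom x ≠ c.1) → v.2 c = cst1 k

lemma supp_comp {l : SimplexCategory} (χ : l ⟶ m) (φ : m ⟶ ⦋N⦌) {a b : Fin (N + 1)}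
    {k : SimplexCategoryᵒᵖ} {v : (DHom N a b).obj k} (h : Supp (χ ≫ φ) v) :
    Supp φ v := fun c hc => h c (fun x => hc (χ.toOrderHom x))

lemma pull_natural (φ : m ⟶ ⦋N⦌) (hs : StrictMono φ.toOrderHom)
    {a₀ b₀ : Fin (m.len + 1)} {a b : Fin (N + 1)} (ha : φ.toOrderHom a₀ = a)
    (hb : φ.toOrderHom b₀ = b) {k l : SimplexCategoryᵒᵖ} (θ : k ⟶ l)
    (v : (DHom N a b).obj k) :
    pull φ hs ha hb ((DHom N a b).map θ v) =
      (DHom m.len a₀ b₀).map θ (pull φ hs ha hb v) :=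
  dhom_ext (fun _ => rfl)

lemma push_pull (φ : m ⟶ ⦋N⦌) (hs : StrictMono φ.toOrderHom) {a₀ b₀ : Fin (m.len + 1)}
    {a b : Fin (N + 1)} (ha : φ.toOrderHom a₀ = a) (hb : φ.toOrderHom b₀ = b)
    {k : SimplexCategoryᵒᵖ} (v : (DHom N a b).obj k) (hsupp : Supp φ v) :
    (DMap φ).map k (pull φ hs ha hb v) = ecast (X := DCat N) ha.symm hb.symm v := by
  subst ha; subst hb
  refine dhom_ext (fun c => shom_ext (fun j => ?_))
  rw [show ((DMap φ).map k (pull φ hs rfl rfl v)).2 = DMapHomFun φ.toOrderHom k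
    (pull φ hs rfl rfl v).2 from rfl]
  erw [DMapHomFun_app]
  erw [ecast_self]
  by_cases hc : ∃ x : Fin (m.len + 1), φ.toOrderHom x = c.1
  · obtain ⟨x, hx⟩ := hc
    obtain ⟨h1, h2⟩ := gap_pre φ hs c.2.1 c.2.2 hx
    have hiff : (∀ y : gapSet m.len a₀ b₀, φ.toOrderHom y.1 = c.1 →
        (SimplexCategory.Hom.toOrderHom ((pull φ hs rfl rfl v).2 y)) j = 1) ↔
        (SimplexCategory.Hom.toOrderHom (v.2 c)) j = 1 := by
      constructor
      · intro h
        have h3 : (SimplexCategory.Hom.toOrderHom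
            (v.2 (gapMap φ hs rfl rfl ⟨x, h1, h2⟩))) j = 1 := h ⟨x, h1, h2⟩ hx
        rwa [show gapMap φ hs rfl rfl ⟨x, h1, h2⟩ = c from Subtype.ext hx] at h3
      · intro h y hy
        show (SimplexCategory.Hom.toOrderHom (v.2 (gapMap φ hs rfl rfl y))) j = 1
        rwa [show gapMap φ hs rfl rfl y = c from Subtype.ext hy]
    rw [if_congr hiff rfl rfl, fin2_ite]
  · push_neg at hc
    rw [if_pos (fun y hy => absurd hy (hc y.1)), hsupp c hc, cst1_app]

lemma pull_push (φ : m ⟶ ⦋N⦌) (hs : StrictMono φ.toOrderHom) {a₀ b₀ : Fin (m.len + 1)}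
    {k : SimplexCategoryᵒᵖ} (u : (DHom m.len a₀ b₀).obj k) :
    pull φ hs rfl rfl ((DMap φ).map (x := a₀) (y := b₀) k u) = u := by
  refine dhom_ext (fun c => shom_ext (fun j => ?_))
  show (SimplexCategory.Hom.toOrderHom
    (DMapHomFun φ.toOrderHom k u.2 (gapMap φ hs rfl rfl c))) j = _
  rw [DMapHomFun_app]
  have hiff : (∀ x : gapSet m.len a₀ b₀, φ.toOrderHom x.1 = (gapMap φ hs rfl rfl c).1 →
      (SimplexCategory.Hom.toOrderHom (u.2 x)) j = 1) ↔
      (SimplexCategory.Hom.toOrderHom (u.2 c)) j = 1 := by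
    constructor
    · intro h
      exact h c rfl
    · intro h y hy
      rwa [show y = c from Subtype.ext (hs.injective hy)]
  rw [if_congr hiff rfl rfl, fin2_ite]

lemma supp_push (φ : m ⟶ ⦋N⦌) {a₀ b₀ : Fin (m.len + 1)} {k : SimplexCategoryᵒᵖ}
    (u : (DHom m.len a₀ b₀).obj k) :
    Supp φ ((DMap φ).map (x := a₀) (y := b₀) k u) := by
  intro c hc
  refine shom_ext (fun j => ?_)
  show (SimplexCategory.Hom.toOrderHom (DMapHomFun φ.toOrderHom k u.2 c)) j = _
  erw [DMapHomFun_app, if_pos (fun y hy => absurd hy (hc y.1)), cst1_app]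

lemma pull_comp {l : SimplexCategory} (χ : l ⟶ m) (φ : m ⟶ ⦋N⦌)
    (hsχ : StrictMono χ.toOrderHom) (hsφ : StrictMono φ.toOrderHom)
    (hsc : StrictMono (χ ≫ φ).toOrderHom)
    {aℓ bℓ : Fin (l.len + 1)} {a b : Fin (N + 1)}
    (ha : (χ ≫ φ).toOrderHom aℓ = a) (hb : (χ ≫ φ).toOrderHom bℓ = b)
    (ha' : φ.toOrderHom (χ.toOrderHom aℓ) = a) (hb' : φ.toOrderHom (χ.toOrderHom bℓ) = b)
    {k : SimplexCategoryᵒᵖ} (v : (DHom N a b).obj k) (hsupp : Supp (χ ≫ φ) v) :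
    (DMap χ).map k (pull (χ ≫ φ) hsc ha hb v) = pull φ hsφ ha' hb' v := by
  refine dhom_ext (fun c => shom_ext (fun j => ?_))
  show (SimplexCategory.Hom.toOrderHom
    (DMapHomFun χ.toOrderHom k (pull (χ ≫ φ) hsc ha hb v).2 c)) j = _
  erw [DMapHomFun_app]
  by_cases hc : ∃ x : Fin (l.len + 1), χ.toOrderHom x = c.1
  · obtain ⟨x, hx⟩ := hc
    obtain ⟨h1, h2⟩ := gap_pre χ hsχ c.2.1 c.2.2 hx
    have hiff : (∀ y : gapSet l.len aℓ bℓ, χ.toOrderHom y.1 = c.1 →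
        (SimplexCategory.Hom.toOrderHom ((pull (χ ≫ φ) hsc ha hb v).2 y)) j = 1) ↔
        (SimplexCategory.Hom.toOrderHom (v.2 (gapMap φ hsφ ha' hb' c))) j = 1 := by
      constructor
      · intro h
        have h3 : (SimplexCategory.Hom.toOrderHom
            (v.2 (gapMap (χ ≫ φ) hsc ha hb ⟨x, h1, h2⟩))) j = 1 := h ⟨x, h1, h2⟩ hx
        have he : gapMap (χ ≫ φ) hsc ha hb ⟨x, h1, h2⟩ = gapMap φ hsφ ha' hb' c := by
          refine Subtype.ext ?_
          show φ.toOrderHom (χ.toOrderHom x) = φ.toOrderHom c.1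
          rw [hx]
        rwa [he] at h3
      · intro h y hy
        show (SimplexCategory.Hom.toOrderHom
          (v.2 (gapMap (χ ≫ φ) hsc ha hb y))) j = 1
        have he : gapMap (χ ≫ φ) hsc ha hb y = gapMap φ hsφ ha' hb' c := by
          refine Subtype.ext ?_
          show φ.toOrderHom (χ.toOrderHom y.1) = φ.toOrderHom c.1
          rw [hy]
        rwa [he]
    rw [if_congr hiff rfl rfl, fin2_ite]
    rfl
  · push_neg at hc
    rw [if_pos (fun y hy => absurd hy (hc y.1))]
    show _ = (SimplexCategory.Hom.toOrderHom (v.2 (gapMap φ hsφ ha' hb' c))) j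
    rw [hsupp (gapMap φ hsφ ha' hb' c) (fun z hz => absurd (hsφ.injective hz) (hc z)),
      cst1_app]

end PullPush
section LiftDataSec

open SimplexCategory

/-- The data of a lifting problem for the coherent nerve: a bottom `N`-simplex `G`
of `𝔑 Y` and a compatible family `fv` of simplices of `𝔑 X` indexed by the
non-surjective maps into `[N]` (i.e. a map `∂Δ[N] ⟶ 𝔑 X`). -/
structure LiftData (N : ℕ) (X Y : SCat) (p : SFunctor X Y) where
  G : SFunctor (DCat N) Y
  fv : ∀ {m : SimplexCategory} (φ : m ⟶ ⦋N⦌),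
    ¬Function.Surjective φ.toOrderHom → SFunctor (DCat m.len) X
  nat : ∀ {l m : SimplexCategory} (θ : l ⟶ m) (φ : m ⟶ ⦋N⦌)
    (h : ¬Function.Surjective φ.toOrderHom)
    (h' : ¬Function.Surjective (θ ≫ φ).toOrderHom),
    fv (θ ≫ φ) h' = SFunctor.comp' (DMap θ) (fv φ h)
  over' : ∀ {m : SimplexCategory} (φ : m ⟶ ⦋N⦌) (h),
    SFunctor.comp' (fv φ h) p = SFunctor.comp' (DMap φ) G

namespace LiftData

variable {X Y : SCat} {p : SFunctor X Y}

lemma fv_congr {N : ℕ} (D : LiftData N X Y p) {m : SimplexCategory} {φ φ' : m ⟶ ⦋N⦌}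
    (h : φ = φ') {h1 h2} : D.fv φ h1 = D.fv φ' h2 := by subst h; rfl

/-- The "vertex" map `[0] ⟶ ⦋N⦌`. -/
def vmap {N : ℕ} (a : Fin (N + 1)) : (⦋0⦌ : SimplexCategory) ⟶ ⦋N⦌ :=
  SimplexCategory.const ⦋0⦌ ⦋N⦌ a

lemma vmap_nonsurj {n : ℕ} (a : Fin (n + 2)) :
    ¬Function.Surjective (vmap (N := n + 1) a).toOrderHom := by
  intro h
  obtain ⟨x, hx⟩ := h (Fin.last (n + 1))
  obtain ⟨y, hy⟩ := h 0
  have h2 : Fin.last (n + 1) = (0 : Fin (n + 2)) := by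
    rw [← hx]
    exact hy
  exact absurd (congrArg Fin.val h2) (by simp)

variable {n : ℕ} (D : LiftData (n + 1) X Y p)

/-- The objects of the lift. -/
def xobj (a : Fin (n + 2)) : X.Obj := (D.fv (vmap a) (vmap_nonsurj a)).obj (0 : Fin 1)

lemma hobj {m' : SimplexCategory} (φ : m' ⟶ ⦋n + 1⦌)
    (hns : ¬Function.Surjective φ.toOrderHom) (a₀ : Fin (m'.len + 1)) :
    (D.fv φ hns).obj a₀ = D.xobj (φ.toOrderHom a₀) := by
  have hfac : vmap (N := n + 1) (φ.toOrderHom a₀) = SimplexCategory.const ⦋0⦌ m' a₀ ≫ φ :=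
    shom_ext (fun _ => rfl)
  have hns' : ¬Function.Surjective (SimplexCategory.const ⦋0⦌ m' a₀ ≫ φ).toOrderHom := by
    rw [← hfac]
    exact vmap_nonsurj _
  have h2 : D.fv (vmap (φ.toOrderHom a₀)) (vmap_nonsurj _) =
      SFunctor.comp' (DMap (SimplexCategory.const ⦋0⦌ m' a₀)) (D.fv φ hns) := by
    rw [D.fv_congr hfac (h2 := hns')]
    exact D.nat _ φ hns hns'
  exact (SFunctor.congr_obj h2 (0 : Fin 1)).symm

lemma hov (a : Fin (n + 2)) : p.obj (D.xobj a) = D.G.obj a :=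
  SFunctor.congr_obj (D.over' (vmap a) (vmap_nonsurj a)) (0 : Fin 1)

/-- The canonical map induced on hom-objects by the boundary datum `fv φ`,
applied to an element of the cube supported on the image of `φ`. -/
def Φ {m' : SimplexCategory} (φ : m' ⟶ ⦋n + 1⦌) (hs : StrictMono φ.toOrderHom)
    (hns : ¬Function.Surjective φ.toOrderHom) (a₀ b₀ : Fin (m'.len + 1))
    {a b : Fin (n + 2)} (ha : φ.toOrderHom a₀ = a) (hb : φ.toOrderHom b₀ = b)
    {k : SimplexCategoryᵒᵖ} (v : (DHom (n + 1) a b).obj k) :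
    (X.Hom (D.xobj a) (D.xobj b)).obj k :=
  ecast ((D.hobj φ hns a₀).trans (congrArg D.xobj ha))
    ((D.hobj φ hns b₀).trans (congrArg D.xobj hb))
    ((D.fv φ hns).map k (pull φ hs ha hb v))

lemma Φ_congr {m' : SimplexCategory} {φ : m' ⟶ ⦋n + 1⦌} {hs hs' hns hns'}
    {a₀ b₀ a₀' b₀' : Fin (m'.len + 1)} {a b : Fin (n + 2)} {ha hb ha' hb'}
    {k : SimplexCategoryᵒᵖ} (v : (DHom (n + 1) a b).obj k)
    (h1 : a₀ = a₀') (h2 : b₀ = b₀') :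
    D.Φ φ hs hns a₀ b₀ ha hb v = D.Φ φ hs' hns' a₀' b₀' ha' hb' v := by
  subst h1; subst h2; rfl

lemma Φ_natural {m' : SimplexCategory} (φ : m' ⟶ ⦋n + 1⦌) (hs) (hns)
    (a₀ b₀ : Fin (m'.len + 1)) {a b : Fin (n + 2)} (ha : φ.toOrderHom a₀ = a)
    (hb : φ.toOrderHom b₀ = b) {k l : SimplexCategoryᵒᵖ} (θ : k ⟶ l)
    (v : (DHom (n + 1) a b).obj k) :
    D.Φ φ hs hns a₀ b₀ ha hb ((DHom (n + 1) a b).map θ v) =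
      (X.Hom (D.xobj a) (D.xobj b)).map θ (D.Φ φ hs hns a₀ b₀ ha hb v) := by
  simp only [Φ]
  rw [pull_natural]
  rw [show (D.fv φ hns).map l ((DHom m'.len a₀ b₀).map θ (pull φ hs ha hb v)) =
    (X.Hom ((D.fv φ hns).obj a₀) ((D.fv φ hns).obj b₀)).map θ
      ((D.fv φ hns).map k (pull φ hs ha hb v)) from
    (D.fv φ hns).map_natural θ (pull φ hs ha hb v), ecast_natural]

lemma Φ_over {m' : SimplexCategory} (φ : m' ⟶ ⦋n + 1⦌) (hs) (hns)
    (a₀ b₀ : Fin (m'.len + 1)) {a b : Fin (n + 2)} (ha : φ.toOrderHom a₀ = a)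
    (hb : φ.toOrderHom b₀ = b) {k : SimplexCategoryᵒᵖ}
    (v : (DHom (n + 1) a b).obj k) (hsupp : Supp φ v) :
    p.map k (D.Φ φ hs hns a₀ b₀ ha hb v) =
      ecast (D.hov a).symm (D.hov b).symm (D.G.map k v) := by
  apply eq_of_heq
  refine HEq.trans ?_ (ecast_heq _ _ _).symm
  simp only [Φ]
  rw [map_ecast]
  refine HEq.trans (ecast_heq _ _ _) ?_
  have h2 := SFunctor.congr_map (D.over' φ hns) a₀ b₀ k (pull φ hs ha hb v)
  have h3 : HEq (p.map k ((D.fv φ hns).map k (pull φ hs ha hb v)))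
      (D.G.map k ((DMap φ).map k (pull φ hs ha hb v))) := by
    rw [show p.map k ((D.fv φ hns).map k (pull φ hs ha hb v)) =
      (SFunctor.comp' (D.fv φ hns) p).map k (pull φ hs ha hb v) from rfl]
    rw [show D.G.map k ((DMap φ).map k (pull φ hs ha hb v)) =
      (SFunctor.comp' (DMap φ) D.G).map k (pull φ hs ha hb v) from rfl]
    rw [h2]
    exact (ecast_heq _ _ _).symm
  refine h3.trans ?_
  rw [push_pull φ hs ha hb v hsupp]
  exact map_heq_congr D.G ha.symm hb.symm v

lemma Φ_id {m' : SimplexCategory} (φ : m' ⟶ ⦋n + 1⦌) (hs) (hns)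
    (a₀ : Fin (m'.len + 1)) {a : Fin (n + 2)} (ha : φ.toOrderHom a₀ = a)
    {k : SimplexCategoryᵒᵖ} (v : (DHom (n + 1) a a).obj k) :
    D.Φ φ hs hns a₀ a₀ ha ha v = X.id (D.xobj a) k := by
  simp only [Φ]
  have h1 : pull φ hs ha ha v = (DCat m'.len).id a₀ k :=
    dhom_ext (fun c => absurd (lt_trans c.2.1 c.2.2) (lt_irrefl _))
  erw [h1, (D.fv φ hns).map_id, ecast_id]

lemma Φ_refine {m₁ ml : SimplexCategory} (φ : m₁ ⟶ ⦋n + 1⦌) (χ' : ml ⟶ ⦋n + 1⦌)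
    (χ₁ : ml ⟶ m₁) (hfac : χ' = χ₁ ≫ φ) (hsφ) (hsχ) (hnsφ) (hnsχ)
    {aℓ bℓ : Fin (ml.len + 1)} {a₀ b₀ : Fin (m₁.len + 1)}
    (hha : χ₁.toOrderHom aℓ = a₀) (hhb : χ₁.toOrderHom bℓ = b₀)
    {a b : Fin (n + 2)} (ha : φ.toOrderHom a₀ = a) (hb : φ.toOrderHom b₀ = b)
    (ha' : χ'.toOrderHom aℓ = a) (hb' : χ'.toOrderHom bℓ = b)
    {k : SimplexCategoryᵒᵖ} (v : (DHom (n + 1) a b).obj k) (hsupp : Supp χ' v) :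
    D.Φ φ hsφ hnsφ a₀ b₀ ha hb v = D.Φ χ' hsχ hnsχ aℓ bℓ ha' hb' v := by
  subst hfac; subst hha; subst hhb
  have hsχ₁ : StrictMono χ₁.toOrderHom := fun i j hij => hsφ.lt_iff_lt.mp (hsχ hij)
  apply eq_of_heq
  refine (ecast_heq _ _ _).trans (HEq.trans ?_ (ecast_heq _ _ _).symm)
  have h2 := SFunctor.congr_map (D.nat χ₁ φ hnsφ hnsχ) aℓ bℓ k
    (pull (χ₁ ≫ φ) hsχ ha' hb' v)
  rw [show (SFunctor.comp' (DMap χ₁) (D.fv φ hnsφ)).map k (pull (χ₁ ≫ φ) hsχ ha' hb' v) =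
    (D.fv φ hnsφ).map k ((DMap χ₁).map k (pull (χ₁ ≫ φ) hsχ ha' hb' v)) from rfl] at h2
  rw [pull_comp χ₁ φ hsχ₁ hsφ hsχ ha' hb' ha hb v hsupp] at h2
  erw [h2]
  exact ecast_heq _ _ _

lemma Φ_eq_Φ {m₁ m₂ : SimplexCategory} (φ : m₁ ⟶ ⦋n + 1⦌) (ψ : m₂ ⟶ ⦋n + 1⦌)
    (hsφ) (hsψ) (hnsφ) (hnsψ) (a₀ b₀ : Fin (m₁.len + 1)) (a₁ b₁ : Fin (m₂.len + 1))
    {a b : Fin (n + 2)} (haφ : φ.toOrderHom a₀ = a) (hbφ : φ.toOrderHom b₀ = b)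
    (haψ : ψ.toOrderHom a₁ = a) (hbψ : ψ.toOrderHom b₁ = b)
    {k : SimplexCategoryᵒᵖ} (v : (DHom (n + 1) a b).obj k)
    (s1 : Supp φ v) (s2 : Supp ψ v) :
    D.Φ φ hsφ hnsφ a₀ b₀ haφ hbφ v = D.Φ ψ hsψ hnsψ a₁ b₁ haψ hbψ v := by
  classical
  set S : Finset (Fin (n + 2)) := Finset.univ.filter
    (fun c => (∃ x, φ.toOrderHom x = c) ∧ (∃ x, ψ.toOrderHom x = c)) with hS
  have haS : a ∈ S := Finset.mem_filter.mpr ⟨Finset.mem_univ _, ⟨a₀, haφ⟩, ⟨a₁, haψ⟩⟩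
  have hbS : b ∈ S := Finset.mem_filter.mpr ⟨Finset.mem_univ _, ⟨b₀, hbφ⟩, ⟨b₁, hbψ⟩⟩
  have hcard : S.card = (S.card - 1) + 1 :=
    (Nat.succ_pred_eq_of_pos (Finset.card_pos.mpr ⟨a, haS⟩)).symm
  set oi := S.orderIsoOfFin hcard with hoi
  set χ' : (⦋S.card - 1⦌ : SimplexCategory) ⟶ ⦋n + 1⦌ := SimplexCategory.Hom.mk
    ⟨fun i => (oi i : Fin (n + 2)), fun i j hij => Subtype.coe_le_coe.mpr (oi.monotone hij)⟩
    with hχ'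
  have hsχ' : StrictMono χ'.toOrderHom := fun i j hij =>
    Subtype.coe_lt_coe.mpr (oi.strictMono hij)
  have hran : ∀ i, χ'.toOrderHom i ∈ S := fun i => (oi i).2
  have hnsφ2 : ¬∀ c, ∃ x, φ.toOrderHom x = c := hnsφ
  rw [not_forall] at hnsφ2
  obtain ⟨c0, hc0⟩ := hnsφ2
  rw [not_exists] at hc0
  have hnsχ' : ¬Function.Surjective χ'.toOrderHom := by
    intro hsurj
    obtain ⟨i, hi⟩ := hsurj c0
    exact absurd (Finset.mem_filter.mp (hi ▸ hran i)).2.1 (by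
      rw [not_exists]; exact hc0)
  have hmem1 : ∀ i : Fin ((⦋S.card - 1⦌ : SimplexCategory).len + 1),
      ∃ x, φ.toOrderHom x = χ'.toOrderHom i :=
    fun i => (Finset.mem_filter.mp (hran i)).2.1
  have hmem2 : ∀ i : Fin ((⦋S.card - 1⦌ : SimplexCategory).len + 1),
      ∃ x, ψ.toOrderHom x = χ'.toOrderHom i :=
    fun i => (Finset.mem_filter.mp (hran i)).2.2
  set f1 : Fin ((⦋S.card - 1⦌ : SimplexCategory).len + 1) → Fin (m₁.len + 1) :=
    fun i => (hmem1 i).choose with hf1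
  set f2 : Fin ((⦋S.card - 1⦌ : SimplexCategory).len + 1) → Fin (m₂.len + 1) :=
    fun i => (hmem2 i).choose with hf2
  have hχ₁spec : ∀ i, φ.toOrderHom (f1 i) = χ'.toOrderHom i :=
    fun i => (hmem1 i).choose_spec
  have hχ₂spec : ∀ i, ψ.toOrderHom (f2 i) = χ'.toOrderHom i :=
    fun i => (hmem2 i).choose_spec
  have hmono1 : Monotone f1 := fun i j hij => hsφ.le_iff_le.mp (by
    rw [hχ₁spec i, hχ₁spec j]
    exact Subtype.coe_le_coe.mpr (oi.monotone hij))
  have hmono2 : Monotone f2 := fun i j hij => hsψ.le_iff_le.mp (by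
    rw [hχ₂spec i, hχ₂spec j]
    exact Subtype.coe_le_coe.mpr (oi.monotone hij))
  set χ₁ : (⦋S.card - 1⦌ : SimplexCategory) ⟶ m₁ :=
    SimplexCategory.Hom.mk ⟨f1, hmono1⟩ with hχ₁
  set χ₂ : (⦋S.card - 1⦌ : SimplexCategory) ⟶ m₂ :=
    SimplexCategory.Hom.mk ⟨f2, hmono2⟩ with hχ₂
  have hfacχ : χ' = χ₁ ≫ φ := shom_ext (fun i => (hχ₁spec i).symm)
  have hfacχ2 : χ' = χ₂ ≫ ψ := shom_ext (fun i => (hχ₂spec i).symm)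
  set aℓ := oi.symm ⟨a, haS⟩ with haℓ
  set bℓ := oi.symm ⟨b, hbS⟩ with hbℓ
  have ha' : χ'.toOrderHom aℓ = a := congrArg Subtype.val (oi.apply_symm_apply ⟨a, haS⟩)
  have hb' : χ'.toOrderHom bℓ = b := congrArg Subtype.val (oi.apply_symm_apply ⟨b, hbS⟩)
  have hha1 : χ₁.toOrderHom aℓ = a₀ := hsφ.injective (by
    rw [show χ₁.toOrderHom aℓ = f1 aℓ from rfl, hχ₁spec aℓ, ha']; exact haφ.symm)
  have hhb1 : χ₁.toOrderHom bℓ = b₀ := hsφ.injective (by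
    rw [show χ₁.toOrderHom bℓ = f1 bℓ from rfl, hχ₁spec bℓ, hb']; exact hbφ.symm)
  have hha2 : χ₂.toOrderHom aℓ = a₁ := hsψ.injective (by
    rw [show χ₂.toOrderHom aℓ = f2 aℓ from rfl, hχ₂spec aℓ, ha']; exact haψ.symm)
  have hhb2 : χ₂.toOrderHom bℓ = b₁ := hsψ.injective (by
    rw [show χ₂.toOrderHom bℓ = f2 bℓ from rfl, hχ₂spec bℓ, hb']; exact hbψ.symm)
  have hsuppχ : Supp χ' v := by
    intro c hc
    by_cases hmem : c.1 ∈ S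
    · exact absurd (congrArg Subtype.val (oi.apply_symm_apply ⟨c.1, hmem⟩))
        (hc (oi.symm ⟨c.1, hmem⟩))
    · by_cases hφc : ∃ x, φ.toOrderHom x = c.1
      · refine s2 c (fun x hx => ?_)
        exact absurd (Finset.mem_filter.mpr ⟨Finset.mem_univ _, hφc, ⟨x, hx⟩⟩) hmem
      · exact s1 c (fun x hx => absurd ⟨x, hx⟩ hφc)
  calc D.Φ φ hsφ hnsφ a₀ b₀ haφ hbφ v
      = D.Φ χ' hsχ' hnsχ' aℓ bℓ ha' hb' v :=
        D.Φ_refine φ χ' χ₁ hfacχ hsφ hsχ' hnsφ hnsχ' hha1 hhb1 haφ hbφ ha' hb' v hsuppχ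
    _ = D.Φ ψ hsψ hnsψ a₁ b₁ haψ hbψ v :=
        (D.Φ_refine ψ χ' χ₂ hfacχ2 hsψ hsχ' hnsψ hnsχ' hha2 hhb2 haψ hbψ ha' hb' v hsuppχ).symm

end LiftData

section ResG

/-- Restriction of a cube element to a sub-interval. -/
def resG {N : ℕ} {a b : Fin (N + 1)} (a' b' : Fin (N + 1)) (h1 : a ≤ a') (h2 : b' ≤ b)
    (h3 : a' ≤ b') {k : SimplexCategoryᵒᵖ} (v : (DHom N a b).obj k) :
    (DHom N a' b').obj k :=
  ⟨⟨h3⟩, fun x => v.2 ⟨x.1, lt_of_le_of_lt h1 x.2.1, lt_of_lt_of_le x.2.2 h2⟩⟩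

lemma resG_natural {N : ℕ} {a b : Fin (N + 1)} (a' b' : Fin (N + 1)) (h1 : a ≤ a')
    (h2 : b' ≤ b) (h3 : a' ≤ b') {k l : SimplexCategoryᵒᵖ} (θ : k ⟶ l)
    (v : (DHom N a b).obj k) :
    resG a' b' h1 h2 h3 ((DHom N a b).map θ v) =
      (DHom N a' b').map θ (resG a' b' h1 h2 h3 v) :=
  dhom_ext (fun _ => rfl)

lemma decomp_zero {N : ℕ} {a d b : Fin (N + 1)} (h1 : a < d) (h2 : d < b)
    {k : SimplexCategoryᵒᵖ} (v : (DHom N a b).obj k) (h0 : v.2 ⟨d, h1, h2⟩ = cst0 k) :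
    v = (DCat N).comp k (resG a d (le_refl a) h2.le h1.le v)
      (resG d b h1.le (le_refl b) h2.le v) := by
  refine dhom_ext (fun c => ?_)
  show v.2 c = DCompFun k (resG a d (le_refl a) h2.le h1.le v).2
    (resG d b h1.le (le_refl b) h2.le v).2 c
  rcases lt_trichotomy c.1 d with h | h | h
  · rw [DCompFun_lt _ _ _ c h]
    exact congrArg v.2 (Subtype.ext rfl)
  · rw [DCompFun_mid _ _ _ c h, show c = ⟨d, h1, h2⟩ from Subtype.ext h]
    exact h0
  · rw [DCompFun_gt _ _ _ c h]
    exact congrArg v.2 (Subtype.ext rfl)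

lemma resG_comp_left {N : ℕ} {a b c : Fin (N + 1)} (hab : a ≤ b) (hbc : b ≤ c)
    {k : SimplexCategoryᵒᵖ} (v : (DHom N a b).obj k) (w : (DHom N b c).obj k) :
    resG a b (le_refl a) hbc hab ((DCat N).comp k v w) = v := by
  refine dhom_ext (fun x => ?_)
  show DCompFun k v.2 w.2 ⟨x.1, lt_of_le_of_lt (le_refl a) x.2.1,
    lt_of_lt_of_le x.2.2 hbc⟩ = v.2 x
  rw [DCompFun_lt k v.2 w.2 ⟨x.1, lt_of_le_of_lt (le_refl a) x.2.1,
    lt_of_lt_of_le x.2.2 hbc⟩ x.2.2]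
  exact congrArg v.2 (Subtype.ext rfl)

lemma resG_comp_right {N : ℕ} {a b c : Fin (N + 1)} (hab : a ≤ b) (hbc : b ≤ c)
    {k : SimplexCategoryᵒᵖ} (v : (DHom N a b).obj k) (w : (DHom N b c).obj k) :
    resG b c hab (le_refl c) hbc ((DCat N).comp k v w) = w := by
  refine dhom_ext (fun x => ?_)
  show DCompFun k v.2 w.2 ⟨x.1, lt_of_le_of_lt hab x.2.1,
    lt_of_lt_of_le x.2.2 (le_refl c)⟩ = w.2 x
  rw [DCompFun_gt k v.2 w.2 ⟨x.1, lt_of_le_of_lt hab x.2.1,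
    lt_of_lt_of_le x.2.2 (le_refl c)⟩ x.2.1]
  exact congrArg w.2 (Subtype.ext rfl)

lemma resG_resG {N : ℕ} {a b : Fin (N + 1)} (a' b' a'' b'' : Fin (N + 1))
    (h1 h2 h3 h1' h2' h3' h1'' h2'' h3'') {k : SimplexCategoryᵒᵖ}
    (v : (DHom N a b).obj k) :
    resG (a := a') (b := b') a'' b'' h1' h2' h3' (resG a' b' h1 h2 h3 v) =
      resG a'' b'' h1'' h2'' h3'' v :=
  dhom_ext (fun _ => rfl)

end ResG

namespace LiftData

variable {X Y : SCat} {p : SFunctor X Y} {n : ℕ} (D : LiftData (n + 1) X Y p)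

lemma Φ_decomp {m' : SimplexCategory} (φ : m' ⟶ ⦋n + 1⦌) (hs) (hns)
    (a₀ d₀ b₀ : Fin (m'.len + 1)) {a d b : Fin (n + 2)} (ha : φ.toOrderHom a₀ = a)
    (hd : φ.toOrderHom d₀ = d) (hb : φ.toOrderHom b₀ = b) (h1 : a < d) (h2 : d < b)
    {k : SimplexCategoryᵒᵖ} (v : (DHom (n + 1) a b).obj k)
    (h0 : v.2 ⟨d, h1, h2⟩ = cst0 k) :
    D.Φ φ hs hns a₀ b₀ ha hb v = X.comp k
      (D.Φ φ hs hns a₀ d₀ ha hd (resG a d (le_refl a) h2.le h1.le v))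
      (D.Φ φ hs hns d₀ b₀ hd hb (resG d b h1.le (le_refl b) h2.le v)) := by
  have hcore : (DCat m'.len).comp k
      (pull φ hs ha hd (resG a d (le_refl a) h2.le h1.le v))
      (pull φ hs hd hb (resG d b h1.le (le_refl b) h2.le v)) = pull φ hs ha hb v := by
    refine dhom_ext (fun x => ?_)
    show DCompFun k (pull φ hs ha hd (resG a d (le_refl a) h2.le h1.le v)).2
      (pull φ hs hd hb (resG d b h1.le (le_refl b) h2.le v)).2 x = v.2 (gapMap φ hs ha hb x)
    rcases lt_trichotomy x.1 d₀ with h | h | h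
    · rw [DCompFun_lt _ _ _ x h]
      exact congrArg v.2 (Subtype.ext rfl)
    · rw [DCompFun_mid _ _ _ x h]
      have hgm : gapMap φ hs ha hb x = ⟨d, h1, h2⟩ :=
        Subtype.ext ((congrArg φ.toOrderHom h).trans hd)
      rw [hgm, h0]
    · rw [DCompFun_gt _ _ _ x h]
      exact congrArg v.2 (Subtype.ext rfl)
  simp only [Φ]
  erw [ecast_comp, ← (D.fv φ hns).map_comp, hcore]

end LiftData

end LiftDataSec
section IntvDelta

open SimplexCategory

variable {n : ℕ}

/-- The inclusion of the sub-interval `[a, b]` of `[n+1]`. -/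
def intv (a b : Fin (n + 2)) (hab : a ≤ b) :
    ((⦋(b : ℕ) - (a : ℕ)⦌ : SimplexCategory)) ⟶ ⦋n + 1⦌ :=
  SimplexCategory.Hom.mk
    ⟨fun i => ⟨(a : ℕ) + i.1, by
        have h1 : i.1 < (b : ℕ) - (a : ℕ) + 1 := i.isLt
        have h2 : (b : ℕ) < n + 2 := b.isLt
        show (a : ℕ) + i.1 < n + 2
        omega⟩,
      fun i j hij => by
        have h3 : i.1 ≤ j.1 := hij
        simp only [Fin.mk_le_mk]
        omega⟩

lemma hs_intv (a b : Fin (n + 2)) (hab : a ≤ b) : StrictMono (intv a b hab).toOrderHom :=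
  fun i j hij => by
    have h3 : i.1 < j.1 := Fin.lt_def.mp hij
    refine Fin.lt_def.mpr ?_
    show (a : ℕ) + i.1 < (a : ℕ) + j.1
    omega

lemma ns_intv (a b : Fin (n + 2)) (hab : a ≤ b) (h : ¬(a = 0 ∧ b = Fin.last (n + 1))) :
    ¬Function.Surjective (intv a b hab).toOrderHom := by
  intro hsurj
  by_cases ha : a = 0
  · have hb : b ≠ Fin.last (n + 1) := fun hb => h ⟨ha, hb⟩
    obtain ⟨x, hx⟩ := hsurj (Fin.last (n + 1))
    have h5 : (a : ℕ) + x.1 = n + 1 := congrArg Fin.val hx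
    have hxb : x.1 < (b : ℕ) - (a : ℕ) + 1 := x.isLt
    have hbv : (b : ℕ) < n + 1 :=
      lt_of_le_of_ne (Nat.lt_succ_iff.mp b.isLt) (fun hh => hb (Fin.ext hh))
    omega
  · obtain ⟨x, hx⟩ := hsurj 0
    have h5 : (a : ℕ) + x.1 = 0 := congrArg Fin.val hx
    have h6 : (a : ℕ) ≠ 0 := fun hh => ha (Fin.ext hh)
    omega

lemma intv_zero (a b : Fin (n + 2)) (hab : a ≤ b) :
    (intv a b hab).toOrderHom 0 = a := by
  refine Fin.ext ?_
  show (a : ℕ) + (0 : Fin ((b : ℕ) - (a : ℕ) + 1)).1 = (a : ℕ)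
  simp

lemma intv_last (a b : Fin (n + 2)) (hab : a ≤ b) :
    (intv a b hab).toOrderHom (Fin.last ((b : ℕ) - (a : ℕ))) = b := by
  refine Fin.ext ?_
  show (a : ℕ) + ((b : ℕ) - (a : ℕ)) = (b : ℕ)
  have := Fin.le_def.mp hab
  omega

lemma supp_intv (a b : Fin (n + 2)) (hab : a ≤ b) {a' b' : Fin (n + 2)}
    (ha' : a ≤ a') (hb' : b' ≤ b) {k : SimplexCategoryᵒᵖ}
    (v : (DHom (n + 1) a' b').obj k) : Supp (intv a b hab) v := by
  intro c hc
  have h1 : (a : ℕ) < c.1.1 :=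
    lt_of_le_of_lt (Fin.le_def.mp ha') (Fin.lt_def.mp c.2.1)
  have h2 : c.1.1 < (b : ℕ) :=
    lt_of_lt_of_le (Fin.lt_def.mp c.2.2) (Fin.le_def.mp hb')
  have h3 : c.1.1 - (a : ℕ) < (b : ℕ) - (a : ℕ) + 1 := by omega
  exact absurd (Fin.ext (show (a : ℕ) + (c.1.1 - (a : ℕ)) = c.1.1 by omega) :
    (intv a b hab).toOrderHom ⟨c.1.1 - (a : ℕ), h3⟩ = c.1) (hc ⟨c.1.1 - (a : ℕ), h3⟩)

/-- The face map as a morphism into `[n+1]`. -/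
def δf (c : Fin (n + 2)) : (⦋n⦌ : SimplexCategory) ⟶ ⦋n + 1⦌ := SimplexCategory.δ c

lemma hs_δf (c : Fin (n + 2)) : StrictMono (δf c).toOrderHom :=
  Fin.strictMono_succAbove c

lemma ns_δf (c : Fin (n + 2)) : ¬Function.Surjective (δf c).toOrderHom := by
  intro h
  obtain ⟨x, hx⟩ := h c
  exact Fin.succAbove_ne c x hx

lemma δf_zero {c : Fin (n + 2)} (hc : (0 : Fin (n + 2)) < c) :
    (δf c).toOrderHom 0 = 0 := by
  have h := Fin.succAbove_of_castSucc_lt c 0 (by simpa using hc)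
  rw [show (δf c).toOrderHom 0 = c.succAbove 0 from rfl, h]
  simp

lemma δf_last {c : Fin (n + 2)} (hc : c < Fin.last (n + 1)) :
    (δf c).toOrderHom (Fin.last n) = Fin.last (n + 1) := by
  have h := Fin.succAbove_of_le_castSucc c (Fin.last n) (by
    rw [Fin.le_castSucc_iff]
    simpa using hc)
  rw [show (δf c).toOrderHom (Fin.last n) = c.succAbove (Fin.last n) from rfl, h]
  exact Fin.succ_last n

lemma supp_δf_resG {c : gapSet (n + 1) 0 (Fin.last (n + 1))}
    {a' b' : Fin (n + 2)} (h1 : (0 : Fin (n + 2)) ≤ a') (h2 : b' ≤ Fin.last (n + 1))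
    (h3 : a' ≤ b') {k : SimplexCategoryᵒᵖ}
    (v : (DHom (n + 1) 0 (Fin.last (n + 1))).obj k) (h : v.2 c = cst1 k) :
    Supp (δf c.1) (resG a' b' h1 h2 h3 v) := by
  intro c' hc'
  have hcc : c'.1 = c.1 := by
    by_contra hne
    obtain ⟨j, hj⟩ := Fin.exists_succAbove_eq hne
    exact hc' j hj
  calc (resG a' b' h1 h2 h3 v).2 c'
      = v.2 ⟨c'.1, lt_of_le_of_lt h1 c'.2.1, lt_of_lt_of_le c'.2.2 h2⟩ := rfl
    _ = v.2 c := congrArg v.2 (Subtype.ext hcc)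
    _ = cst1 k := h

lemma supp_δf {c : gapSet (n + 1) 0 (Fin.last (n + 1))} {k : SimplexCategoryᵒᵖ}
    (v : (DHom (n + 1) 0 (Fin.last (n + 1))).obj k) (h : v.2 c = cst1 k) :
    Supp (δf c.1) v := by
  intro c' hc'
  have hcc : c'.1 = c.1 := by
    by_contra hne
    obtain ⟨j, hj⟩ := Fin.exists_succAbove_eq hne
    exact hc' j hj
  rw [show c' = c from Subtype.ext hcc]
  exact h

end IntvDelta

section BsubSec

/-- The boundary of the cube, as a simplicial subset: simplices having some
coordinate constant at `1` or at `0`. -/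
def Bsub (n : ℕ) : SSet.{0} where
  obj k := {v : (DHom (n + 1) 0 (Fin.last (n + 1))).obj k //
    ∃ c : gapSet (n + 1) 0 (Fin.last (n + 1)), v.2 c = cst1 k ∨ v.2 c = cst0 k}
  map {k l} θ := ↾fun w => ⟨(DHom (n + 1) 0 (Fin.last (n + 1))).map θ w.1, by
    obtain ⟨c, hc | hc⟩ := w.2
    · exact ⟨c, Or.inl (by show θ.unop ≫ w.1.2 c = _; rw [hc, comp_cst1])⟩
    · exact ⟨c, Or.inr (by show θ.unop ≫ w.1.2 c = _; rw [hc, comp_cst0])⟩⟩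
  map_id k := by
    refine ConcreteCategory.hom_ext _ _ fun w => ?_
    exact Subtype.ext (ConcreteCategory.congr_hom ((DHom (n + 1) 0 (Fin.last (n + 1))).map_id k) w.1)
  map_comp {k l o} θ ψ := by
    refine ConcreteCategory.hom_ext _ _ fun w => ?_
    exact Subtype.ext (ConcreteCategory.congr_hom ((DHom (n + 1) 0 (Fin.last (n + 1))).map_comp θ ψ) w.1)

/-- The inclusion of the boundary of the cube. -/
def iB (n : ℕ) : Bsub n ⟶ DHom (n + 1) 0 (Fin.last (n + 1)) where
  app _ := ↾Subtype.val
  naturality _ _ _ := rfl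

lemma mono_iB (n : ℕ) : CategoryTheory.Mono (iB n) := by
  haveI : ∀ k, CategoryTheory.Mono ((iB n).app k) := fun k =>
    (CategoryTheory.mono_iff_injective _).mpr Subtype.val_injective
  exact CategoryTheory.NatTrans.mono_of_mono_app _

end BsubSec
namespace LiftData

open SimplexCategory

variable {X Y : SCat} {p : SFunctor X Y} {n : ℕ} (D : LiftData (n + 1) X Y p)

/-- The canonical interval map on hom-objects. -/
def Φint (a b : Fin (n + 2)) (hab : a ≤ b) (hne : ¬(a = 0 ∧ b = Fin.last (n + 1)))
    {k : SimplexCategoryᵒᵖ} (w : (DHom (n + 1) a b).obj k) :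
    (X.Hom (D.xobj a) (D.xobj b)).obj k :=
  D.Φ (intv a b hab) (hs_intv a b hab) (ns_intv a b hab hne) 0
    (Fin.last ((b : ℕ) - (a : ℕ))) (intv_zero a b hab) (intv_last a b hab) w

lemma Φint_decomp (a d b : Fin (n + 2)) (h1 : a < d) (h2 : d < b)
    (hne : ¬(a = 0 ∧ b = Fin.last (n + 1)))
    (hne1 : ¬(a = 0 ∧ d = Fin.last (n + 1))) (hne2 : ¬(d = 0 ∧ b = Fin.last (n + 1)))
    {k : SimplexCategoryᵒᵖ} (w : (DHom (n + 1) a b).obj k)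
    (h0 : w.2 ⟨d, h1, h2⟩ = cst0 k) :
    D.Φint a b (le_trans h1.le h2.le) hne w = X.comp k
      (D.Φint a d h1.le hne1 (resG a d (le_refl a) h2.le h1.le w))
      (D.Φint d b h2.le hne2 (resG d b h1.le (le_refl b) h2.le w)) := by
  have hd : (d : ℕ) - (a : ℕ) < (b : ℕ) - (a : ℕ) + 1 := by
    have := Fin.lt_def.mp h1
    have := Fin.lt_def.mp h2
    omega
  have hdm : (intv a b (le_trans h1.le h2.le)).toOrderHom ⟨(d : ℕ) - (a : ℕ), hd⟩ = d := by
    refine Fin.ext ?_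
    show (a : ℕ) + ((d : ℕ) - (a : ℕ)) = (d : ℕ)
    have := Fin.lt_def.mp h1
    omega
  rw [show D.Φint a b (le_trans h1.le h2.le) hne w =
    D.Φ (intv a b (le_trans h1.le h2.le)) (hs_intv a b _) (ns_intv a b _ hne) 0
      (Fin.last ((b : ℕ) - (a : ℕ))) (intv_zero a b _) (intv_last a b _) w from rfl]
  rw [D.Φ_decomp (intv a b (le_trans h1.le h2.le)) (hs_intv a b _) (ns_intv a b _ hne) 0
    ⟨(d : ℕ) - (a : ℕ), hd⟩ (Fin.last ((b : ℕ) - (a : ℕ))) (intv_zero a b _) hdm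
    (intv_last a b _) h1 h2 w h0]
  congr 1
  · exact D.Φ_eq_Φ _ _ _ _ _ _ _ _ _ _ _ _ _ _ _
      (supp_intv a b (le_trans h1.le h2.le) (le_refl a) h2.le _)
      (supp_intv a d h1.le (le_refl a) (le_refl d) _)
  · exact D.Φ_eq_Φ _ _ _ _ _ _ _ _ _ _ _ _ _ _ _
      (supp_intv a b (le_trans h1.le h2.le) h1.le (le_refl b) _)
      (supp_intv d b h2.le (le_refl d) (le_refl b) _)

/-- The value of the boundary map on a face where some coordinate is constant `1`. -/
def ΦOne (c : gapSet (n + 1) 0 (Fin.last (n + 1))) {k : SimplexCategoryᵒᵖ}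
    (v : (DHom (n + 1) 0 (Fin.last (n + 1))).obj k) :
    (X.Hom (D.xobj 0) (D.xobj (Fin.last (n + 1)))).obj k :=
  D.Φ (δf c.1) (hs_δf c.1) (ns_δf c.1) 0 (Fin.last n) (δf_zero c.2.1) (δf_last c.2.2) v

lemma neOne (c : gapSet (n + 1) 0 (Fin.last (n + 1))) :
    ¬((0 : Fin (n + 2)) = 0 ∧ c.1 = Fin.last (n + 1)) :=
  fun h => absurd h.2 (ne_of_lt c.2.2)

lemma neTwo (c : gapSet (n + 1) 0 (Fin.last (n + 1))) :
    ¬(c.1 = 0 ∧ Fin.last (n + 1) = Fin.last (n + 1)) :=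
  fun h => absurd h.1 (ne_of_gt c.2.1)

/-- The value of the boundary map on a face where some coordinate is constant `0`:
the composite of the two restrictions. -/
def ΦZero (c : gapSet (n + 1) 0 (Fin.last (n + 1))) {k : SimplexCategoryᵒᵖ}
    (v : (DHom (n + 1) 0 (Fin.last (n + 1))).obj k) :
    (X.Hom (D.xobj 0) (D.xobj (Fin.last (n + 1)))).obj k :=
  X.comp k
    (D.Φint 0 c.1 c.2.1.le (neOne c) (resG 0 c.1 (le_refl 0) c.2.2.le c.2.1.le v))
    (D.Φint c.1 (Fin.last (n + 1)) c.2.2.le (neTwo c)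
      (resG c.1 (Fin.last (n + 1)) c.2.1.le (le_refl _) c.2.2.le v))

lemma one_one {k : SimplexCategoryᵒᵖ} (v : (DHom (n + 1) 0 (Fin.last (n + 1))).obj k)
    (c c' : gapSet (n + 1) 0 (Fin.last (n + 1))) (h : v.2 c = cst1 k)
    (h' : v.2 c' = cst1 k) : D.ΦOne c v = D.ΦOne c' v :=
  D.Φ_eq_Φ _ _ _ _ _ _ _ _ _ _ _ _ _ _ v (supp_δf v h) (supp_δf v h')

lemma one_zero {k : SimplexCategoryᵒᵖ} (v : (DHom (n + 1) 0 (Fin.last (n + 1))).obj k)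
    (c d : gapSet (n + 1) 0 (Fin.last (n + 1))) (h1 : v.2 c = cst1 k)
    (h0 : v.2 d = cst0 k) : D.ΦOne c v = D.ΦZero d v := by
  have hne : d.1 ≠ c.1 := by
    intro he
    rw [show d = c from Subtype.ext he, h1] at h0
    exact cst0_ne_cst1 k h0.symm
  obtain ⟨d₀, hd₀⟩ := Fin.exists_succAbove_eq hne
  have hd₀' : (δf c.1).toOrderHom d₀ = d.1 := hd₀
  unfold ΦOne
  rw [D.Φ_decomp (δf c.1) (hs_δf c.1) (ns_δf c.1) 0 d₀ (Fin.last n) (δf_zero c.2.1) hd₀'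
    (δf_last c.2.2) d.2.1 d.2.2 v h0]
  unfold ΦZero
  congr 1
  · exact D.Φ_eq_Φ _ _ _ _ _ _ _ _ _ _ _ _ _ _ _
      (supp_δf_resG _ _ _ v h1) (supp_intv 0 d.1 d.2.1.le (le_refl 0) (le_refl d.1) _)
  · exact D.Φ_eq_Φ _ _ _ _ _ _ _ _ _ _ _ _ _ _ _
      (supp_δf_resG _ _ _ v h1)
      (supp_intv d.1 (Fin.last (n + 1)) d.2.2.le (le_refl d.1) (le_refl _) _)

lemma zero_zero_lt {k : SimplexCategoryᵒᵖ}
    (v : (DHom (n + 1) 0 (Fin.last (n + 1))).obj k)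
    (d d' : gapSet (n + 1) 0 (Fin.last (n + 1))) (hlt : d.1 < d'.1)
    (h0 : v.2 d = cst0 k) (h0' : v.2 d' = cst0 k) : D.ΦZero d v = D.ΦZero d' v := by
  have hneA : ¬(d.1 = 0 ∧ d'.1 = Fin.last (n + 1)) := fun h => absurd h.1 (ne_of_gt d.2.1)
  unfold ΦZero
  -- expand the second factor of the LHS at d'
  rw [D.Φint_decomp d.1 d'.1 (Fin.last (n + 1)) hlt d'.2.2 (neTwo d)
    hneA (neTwo d')
    (resG d.1 (Fin.last (n + 1)) d.2.1.le (le_refl _) d.2.2.le v) h0']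
  -- expand the first factor of the RHS at d
  rw [D.Φint_decomp 0 d.1 d'.1 d.2.1 hlt (neOne d') (neOne d) hneA
    (resG 0 d'.1 (le_refl 0) d'.2.2.le d'.2.1.le v) h0]
  -- collapse iterated restrictions
  rw [resG_resG d.1 (Fin.last (n + 1)) d.1 d'.1 d.2.1.le (le_refl _) d.2.2.le
    (le_refl d.1) d'.2.2.le hlt.le d.2.1.le d'.2.2.le hlt.le v]
  rw [resG_resG d.1 (Fin.last (n + 1)) d'.1 (Fin.last (n + 1)) d.2.1.le (le_refl _)
    d.2.2.le hlt.le (le_refl _) d'.2.2.le d'.2.1.le (le_refl _) d'.2.2.le v]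
  rw [resG_resG 0 d'.1 0 d.1 (le_refl 0) d'.2.2.le d'.2.1.le (le_refl 0) hlt.le
    d.2.1.le (le_refl 0) d.2.2.le d.2.1.le v]
  rw [resG_resG 0 d'.1 d.1 d'.1 (le_refl 0) d'.2.2.le d'.2.1.le d.2.1.le (le_refl _)
    hlt.le d.2.1.le d'.2.2.le hlt.le v]
  rw [← X.assoc]

lemma zero_zero {k : SimplexCategoryᵒᵖ}
    (v : (DHom (n + 1) 0 (Fin.last (n + 1))).obj k)
    (d d' : gapSet (n + 1) 0 (Fin.last (n + 1)))
    (h0 : v.2 d = cst0 k) (h0' : v.2 d' = cst0 k) : D.ΦZero d v = D.ΦZero d' v := by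
  rcases lt_trichotomy d.1 d'.1 with h | h | h
  · exact D.zero_zero_lt v d d' h h0 h0'
  · rw [show d = d' from Subtype.ext h]
  · exact (D.zero_zero_lt v d' d h h0' h0).symm

open scoped Classical in
/-- The glued boundary map on the boundary of the cube. -/
noncomputable def beta (k : SimplexCategoryᵒᵖ) (w : (Bsub n).obj k) :
    (X.Hom (D.xobj 0) (D.xobj (Fin.last (n + 1)))).obj k :=
  if h : ∃ c : gapSet (n + 1) 0 (Fin.last (n + 1)), w.1.2 c = cst1 k then
    D.ΦOne h.choose w.1
  else
    D.ΦZero (show ∃ c : gapSet (n + 1) 0 (Fin.last (n + 1)), w.1.2 c = cst0 k by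
      obtain ⟨c, hc | hc⟩ := w.2
      · exact absurd ⟨c, hc⟩ h
      · exact ⟨c, hc⟩).choose w.1

lemma beta_one {k : SimplexCategoryᵒᵖ} (w : (Bsub n).obj k)
    (c : gapSet (n + 1) 0 (Fin.last (n + 1))) (h : w.1.2 c = cst1 k) :
    D.beta k w = D.ΦOne c w.1 := by
  unfold beta
  rw [dif_pos (⟨c, h⟩ : ∃ c' : gapSet (n + 1) 0 (Fin.last (n + 1)), w.1.2 c' = cst1 k)]
  exact D.one_one w.1 _ c
    ((⟨c, h⟩ : ∃ c' : gapSet (n + 1) 0 (Fin.last (n + 1)),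
      w.1.2 c' = cst1 k).choose_spec) h

lemma beta_zero {k : SimplexCategoryᵒᵖ} (w : (Bsub n).obj k)
    (d : gapSet (n + 1) 0 (Fin.last (n + 1))) (h : w.1.2 d = cst0 k) :
    D.beta k w = D.ΦZero d w.1 := by
  unfold beta
  split_ifs with h1
  · exact D.one_zero w.1 _ d h1.choose_spec h
  · refine D.zero_zero w.1 _ d ?_ h
    exact Exists.choose_spec (show ∃ c, w.1.2 c = cst0 k by
      obtain ⟨c, hc | hc⟩ := w.2
      · exact absurd ⟨c, hc⟩ h1
      · exact ⟨c, hc⟩)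

end LiftData
namespace LiftData

open SimplexCategory CategoryTheory

variable {X Y : SCat} {p : SFunctor X Y} {n : ℕ} (D : LiftData (n + 1) X Y p)

lemma beta_natural {k l : SimplexCategoryᵒᵖ} (θ : k ⟶ l) (w : (Bsub n).obj k) :
    D.beta l ((Bsub n).map θ w) =
      (X.Hom (D.xobj 0) (D.xobj (Fin.last (n + 1)))).map θ (D.beta k w) := by
  obtain ⟨c, hc | hc⟩ := w.2
  · have hc' : ((Bsub n).map θ w).1.2 c = cst1 l := by
      show θ.unop ≫ w.1.2 c = _
      rw [hc, comp_cst1]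
    rw [D.beta_one _ c hc', D.beta_one w c hc]
    exact D.Φ_natural _ _ _ _ _ _ _ θ w.1
  · have hc' : ((Bsub n).map θ w).1.2 c = cst0 l := by
      show θ.unop ≫ w.1.2 c = _
      rw [hc, comp_cst0]
    rw [D.beta_zero _ c hc', D.beta_zero w c hc]
    show X.comp l _ _ = _
    rw [show ((Bsub n).map θ w).1 =
      (DHom (n + 1) 0 (Fin.last (n + 1))).map θ w.1 from rfl]
    rw [resG_natural, resG_natural]
    unfold ΦZero Φint
    rw [D.Φ_natural, D.Φ_natural, X.comp_map]

lemma beta_over {k : SimplexCategoryᵒᵖ} (w : (Bsub n).obj k) :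
    p.map k (D.beta k w) =
      ecast (D.hov 0).symm (D.hov (Fin.last (n + 1))).symm (D.G.map k w.1) := by
  obtain ⟨c, hc | hc⟩ := w.2
  · rw [D.beta_one w c hc]
    exact D.Φ_over _ _ _ _ _ _ _ w.1 (supp_δf w.1 hc)
  · rw [D.beta_zero w c hc]
    show p.map k (X.comp k _ _) = _
    rw [p.map_comp]
    unfold Φint
    rw [D.Φ_over _ _ _ _ _ _ _ _ (supp_intv 0 c.1 c.2.1.le (le_refl 0) (le_refl c.1) _),
      D.Φ_over _ _ _ _ _ _ _ _
        (supp_intv c.1 (Fin.last (n + 1)) c.2.2.le (le_refl c.1) (le_refl _) _),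
      ecast_comp]
    refine congrArg (ecast _ _) ?_
    erw [← D.G.map_comp, ← decomp_zero c.2.1 c.2.2 w.1 hc]

/-- The simplicial functor `K01 (Bsub n) ⟶ X` given by the boundary map. -/
noncomputable def betaF : SFunctor (K01 (Bsub n)) X where
  obj x := match x with
    | false => D.xobj 0
    | true => D.xobj (Fin.last (n + 1))
  map {x y} k f :=
    match x, y, f with
    | false, false, _ => X.id (D.xobj 0) k
    | false, true, f => D.beta k f
    | true, true, _ => X.id (D.xobj (Fin.last (n + 1))) k
    | true, false, f => Empty.elim f
  map_id x k := by cases x <;> rfl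
  map_comp {x y z} k f g := by
    cases x <;> cases y <;> cases z <;>
      first
        | exact Empty.elim f
        | exact Empty.elim g
        | exact (X.id_comp k _).symm
        | exact (X.comp_id k _).symm
  map_natural {x y} {k l} θ f := by
    cases x <;> cases y
    · exact (X.id_map _ θ).symm
    · exact D.beta_natural θ f
    · exact Empty.elim f
    · exact (X.id_map _ θ).symm

/-- The simplicial functor `K01 (cube) ⟶ Y` given by `G` on `Hom(0, last)`. -/
def gammaF : SFunctor (K01 (DHom (n + 1) 0 (Fin.last (n + 1)))) Y where
  obj x := match x with
    | false => p.obj (D.xobj 0)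
    | true => p.obj (D.xobj (Fin.last (n + 1)))
  map {x y} k f :=
    match x, y, f with
    | false, false, _ => Y.id (p.obj (D.xobj 0)) k
    | false, true, f =>
      ecast (D.hov 0).symm (D.hov (Fin.last (n + 1))).symm (D.G.map k f)
    | true, true, _ => Y.id (p.obj (D.xobj (Fin.last (n + 1)))) k
    | true, false, f => Empty.elim f
  map_id x k := by cases x <;> rfl
  map_comp {x y z} k f g := by
    cases x <;> cases y <;> cases z <;>
      first
        | exact Empty.elim f
        | exact Empty.elim g
        | exact (Y.id_comp k _).symm
        | exact (Y.comp_id k _).symm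
  map_natural {x y} {k l} θ f := by
    cases x <;> cases y
    · exact (Y.id_map _ θ).symm
    · exact (congrArg (ecast (D.hov 0).symm (D.hov (Fin.last (n + 1))).symm)
        (D.G.map_natural θ f)).trans (ecast_natural _ _ θ _).symm
    · exact Empty.elim f
    · exact (Y.id_map _ θ).symm

lemma sq_comm : CommSq D.betaF (K01map (iB n)) (show X ⟶ Y from p) D.gammaF := by
  constructor
  refine SFunctor.ext' (funext fun x => by cases x <;> rfl) ?_
  intro x y k f
  cases x <;> cases y
  · exact heq_of_eq (p.map_id _ k)
  · exact heq_of_eq (D.beta_over f)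
  · exact Empty.elim f
  · exact heq_of_eq (p.map_id _ k)

lemma exists_ell (hp : rlpOf genCof (show X ⟶ Y from p)) :
    ∃ ℓ : ∀ (k : SimplexCategoryᵒᵖ) (v : (DHom (n + 1) 0 (Fin.last (n + 1))).obj k),
      (X.Hom (D.xobj 0) (D.xobj (Fin.last (n + 1)))).obj k,
      (∀ {k l : SimplexCategoryᵒᵖ} (θ : k ⟶ l) (v),
        ℓ l ((DHom (n + 1) 0 (Fin.last (n + 1))).map θ v) =
          (X.Hom (D.xobj 0) (D.xobj (Fin.last (n + 1)))).map θ (ℓ k v)) ∧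
      (∀ {k : SimplexCategoryᵒᵖ} (w : (Bsub n).obj k), ℓ k w.1 = D.beta k w) ∧
      (∀ {k : SimplexCategoryᵒᵖ} (v), p.map k (ℓ k v) =
        ecast (D.hov 0).symm (D.hov (Fin.last (n + 1))).symm (D.G.map k v)) := by
  have hlift : HasLiftingProperty (K01map (iB n)) (show X ⟶ Y from p) :=
    hp _ (Or.inr ⟨Bsub n, _, iB n, mono_iB n, ⟨Iso.refl _⟩⟩)
  have hsq : CommSq D.betaF (K01map (iB n)) (show X ⟶ Y from p) D.gammaF := D.sq_comm
  haveI := hlift.sq_hasLift hsq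
  set L := hsq.lift with hLdef
  have hfl : K01map (iB n) ≫ L = D.betaF := hsq.fac_left
  have hfr : L ≫ (show X ⟶ Y from p) = D.gammaF := hsq.fac_right
  have hobjL : L.obj = D.betaF.obj := congrArg SFunctor.obj hfl
  have h0 : L.obj false = D.xobj 0 := congrFun hobjL false
  have h1 : L.obj true = D.xobj (Fin.last (n + 1)) := congrFun hobjL true
  refine ⟨fun k v => ecast h0 h1 (L.map (x := false) (y := true) k v), ?_, ?_, ?_⟩
  · intro k l θ v
    exact (congrArg (ecast h0 h1) (L.map_natural (x := false) (y := true) θ v)).trans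
      (ecast_natural h0 h1 θ _).symm
  · intro k w
    exact (SFunctor.congr_map hfl false true k w).symm
  · intro k v
    have h3 := SFunctor.congr_map hfr false true k v
    rw [map_ecast]
    refine eq_of_heq ((ecast_heq _ _ _).trans (HEq.trans ?_ (heq_of_eq
      (rfl : D.gammaF.map (x := false) (y := true) k v =
        ecast (D.hov 0).symm (D.hov (Fin.last (n + 1))).symm (D.G.map k v)))))
    exact ((heq_of_eq h3).trans (ecast_heq _ _ _)).symm

end LiftData
section MoreCast

lemma ecast_cancel {X : SCat} {x x' y y' : X.Obj} (h1 : x = x') (h2 : y = y')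
    (h3 : x' = x) (h4 : y' = y) {k : SimplexCategoryᵒᵖ} (g : (X.Hom x y).obj k) :
    ecast h3 h4 (ecast h1 h2 g) = g := by
  subst h1; subst h2; rfl

lemma pull_ecast {N : ℕ} {m : SimplexCategory} (φ : m ⟶ ⦋N⦌)
    (hs : StrictMono φ.toOrderHom) {a₀ b₀ : Fin (m.len + 1)} {a a' b b' : Fin (N + 1)}
    (hx : a = a') (hy : b = b') (ha : φ.toOrderHom a₀ = a') (hb : φ.toOrderHom b₀ = b')
    {k : SimplexCategoryᵒᵖ} (v : (DHom N a b).obj k) :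
    pull φ hs ha hb (ecast (X := DCat N) hx hy v) =
      pull φ hs (ha.trans hx.symm) (hb.trans hy.symm) v := by
  subst hx; subst hy; rfl

lemma ecast_coord {N : ℕ} {a a' b b' : Fin (N + 1)} (hx : a = a') (hy : b = b')
    {k : SimplexCategoryᵒᵖ} (v : (DHom N a b).obj k) (c : gapSet N a' b') :
    (ecast (X := DCat N) hx hy v).2 c = v.2 ⟨c.1, hx.symm ▸ c.2.1, hy.symm ▸ c.2.2⟩ := by
  subst hx; subst hy; rfl

end MoreCast

namespace LiftData

open SimplexCategory CategoryTheory

variable {X Y : SCat} {p : SFunctor X Y} {n : ℕ} (D : LiftData (n + 1) X Y p)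

lemma Φ_ecast {m' : SimplexCategory} (φ : m' ⟶ ⦋n + 1⦌) (hs) (hns)
    (a₀ b₀ : Fin (m'.len + 1)) {a a' b b' : Fin (n + 2)} (hx : a = a') (hy : b = b')
    (ha : φ.toOrderHom a₀ = a') (hb : φ.toOrderHom b₀ = b') {k : SimplexCategoryᵒᵖ}
    (v : (DHom (n + 1) a b).obj k) :
    D.Φ φ hs hns a₀ b₀ ha hb (ecast (X := DCat (n + 1)) hx hy v) =
      ecast (congrArg D.xobj hx) (congrArg D.xobj hy)
        (D.Φ φ hs hns a₀ b₀ (ha.trans hx.symm) (hb.trans hy.symm) v) := by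
  subst hx; subst hy; rfl

lemma Φ_push {m' : SimplexCategory} (φ : m' ⟶ ⦋n + 1⦌) (hs) (hns)
    (a₀ b₀ : Fin (m'.len + 1)) {k : SimplexCategoryᵒᵖ}
    (u : ((DCat m'.len).Hom a₀ b₀).obj k) :
    D.Φ φ hs hns a₀ b₀ rfl rfl ((DMap φ).map k u) =
      ecast (D.hobj φ hns a₀) (D.hobj φ hns b₀) ((D.fv φ hns).map k u) := by
  simp only [Φ]
  rw [pull_push φ hs u]

lemma exists_H_succ (hp : rlpOf genCof (show X ⟶ Y from p)) :
    ∃ H : SFunctor (DCat (n + 1)) X, SFunctor.comp' H p = D.G ∧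
      ∀ {m' : SimplexCategory} (φ : m' ⟶ ⦋n + 1⦌) (hns),
        SFunctor.comp' (DMap φ) H = D.fv φ hns := by
  classical
  obtain ⟨ℓ, ℓnat, ℓbeta, ℓover⟩ := D.exists_ell hp
  set F : ∀ (a b : Fin (n + 2)) (k : SimplexCategoryᵒᵖ) (v : (DHom (n + 1) a b).obj k),
      (X.Hom (D.xobj a) (D.xobj b)).obj k := fun a b k v =>
    if h : a = 0 ∧ b = Fin.last (n + 1) then
      ecast (congrArg D.xobj h.1).symm (congrArg D.xobj h.2).symm
        (ℓ k (ecast (X := DCat (n + 1)) h.1 h.2 v))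
    else D.Φint a b v.1.down h v
    with hF
  have hF_full : ∀ {a b : Fin (n + 2)} (h : a = 0 ∧ b = Fin.last (n + 1)) (k) (v),
      F a b k v = ecast (congrArg D.xobj h.1).symm (congrArg D.xobj h.2).symm
        (ℓ k (ecast (X := DCat (n + 1)) h.1 h.2 v)) := fun h k v => dif_pos h
  have hF_full0 : ∀ (k) (v : (DHom (n + 1) 0 (Fin.last (n + 1))).obj k),
      F 0 (Fin.last (n + 1)) k v = ℓ k v := by
    intro k v
    rw [hF_full ⟨rfl, rfl⟩ k v]
    rfl
  have hF_ne : ∀ {a b : Fin (n + 2)} (h : ¬(a = 0 ∧ b = Fin.last (n + 1))) (k) (v),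
      F a b k v = D.Φint a b v.1.down h v := fun h k v => dif_neg h
  have h0ne : ∀ a : Fin (n + 2), ¬(a = 0 ∧ a = Fin.last (n + 1)) := by
    rintro a ⟨rfl, h2⟩
    exact absurd (congrArg Fin.val h2) (by simp)
  have hsing : ∀ (a : Fin (n + 2)) (k) (v : (DHom (n + 1) a a).obj k),
      F a a k v = X.id (D.xobj a) k := by
    intro a k v
    rw [hF_ne (h0ne a) k v]
    have hz : Fin.last ((a : ℕ) - (a : ℕ)) = (0 : Fin ((a : ℕ) - (a : ℕ) + 1)) := by
      refine Fin.ext ?_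
      show (a : ℕ) - (a : ℕ) = (0 : Fin ((a : ℕ) - (a : ℕ) + 1)).1
      simp
    exact (D.Φ_congr v rfl hz).trans (D.Φ_id (intv a a v.1.down) (hs_intv a a v.1.down)
      (ns_intv a a v.1.down (h0ne a)) 0 (intv_zero a a v.1.down) v)
  have hcompF : ∀ {a b c : Fin (n + 2)} (k) (v : (DHom (n + 1) a b).obj k)
      (w : (DHom (n + 1) b c).obj k),
      F a c k ((DCat (n + 1)).comp k v w) = X.comp k (F a b k v) (F b c k w) := by
    intro a b c k v w
    by_cases hba : b = a
    · subst hba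
      have hvw : (DCat (n + 1)).comp k v w = w := by
        refine dhom_ext (fun x => ?_)
        show DCompFun k v.2 w.2 x = w.2 x
        rw [DCompFun_gt k v.2 w.2 x x.2.1]
        exact congrArg w.2 (Subtype.ext rfl)
      rw [hvw, hsing b k v, X.id_comp]
    by_cases hbc : b = c
    · subst hbc
      have hvw : (DCat (n + 1)).comp k v w = v := by
        refine dhom_ext (fun x => ?_)
        show DCompFun k v.2 w.2 x = v.2 x
        rw [DCompFun_lt k v.2 w.2 x x.2.2]
        exact congrArg v.2 (Subtype.ext rfl)
      rw [hvw, hsing b k w, X.comp_id]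
    have hab : a < b := lt_of_le_of_ne v.1.down (fun h => hba h.symm)
    have hbc' : b < c := lt_of_le_of_ne w.1.down hbc
    have hmid : ((DCat (n + 1)).comp k v w).2 ⟨b, hab, hbc'⟩ = cst0 k :=
      DCompFun_mid k v.2 w.2 ⟨b, hab, hbc'⟩ rfl
    have hnab : ¬(a = 0 ∧ b = Fin.last (n + 1)) :=
      fun h => absurd (h.2 ▸ hbc' : Fin.last (n + 1) < c) (not_lt.mpr (Fin.le_last c))
    have hnbc : ¬(b = 0 ∧ c = Fin.last (n + 1)) :=
      fun h => absurd (h.1 ▸ hab : a < 0) (not_lt.mpr (Fin.zero_le a))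
    by_cases hfull : a = 0 ∧ c = Fin.last (n + 1)
    · obtain ⟨h1, h2⟩ := hfull
      subst h1; subst h2
      erw [hF_full0]
      have hmem : ∃ cc : gapSet (n + 1) 0 (Fin.last (n + 1)),
          ((DCat (n + 1)).comp k v w).2 cc = cst1 k ∨
          ((DCat (n + 1)).comp k v w).2 cc = cst0 k := ⟨⟨b, hab, hbc'⟩, Or.inr hmid⟩
      rw [show ℓ k ((DCat (n + 1)).comp k v w) = D.beta k ⟨(DCat (n + 1)).comp k v w, hmem⟩
        from ℓbeta ⟨_, hmem⟩]
      rw [D.beta_zero ⟨_, hmem⟩ ⟨b, hab, hbc'⟩ hmid]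
      show X.comp k _ _ = _
      rw [hF_ne hnab, hF_ne hnbc]
      rw [resG_comp_left hab.le hbc'.le v w, resG_comp_right hab.le hbc'.le v w]
    · erw [hF_ne hfull, hF_ne hnab, hF_ne hnbc]
      rw [D.Φint_decomp a b c hab hbc' hfull hnab hnbc ((DCat (n + 1)).comp k v w) hmid]
      rw [resG_comp_left hab.le hbc'.le v w, resG_comp_right hab.le hbc'.le v w]
  have hnatF : ∀ {a b : Fin (n + 2)} {k l : SimplexCategoryᵒᵖ} (θ : k ⟶ l)
      (v : (DHom (n + 1) a b).obj k),
      F a b l ((DHom (n + 1) a b).map θ v) =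
        (X.Hom (D.xobj a) (D.xobj b)).map θ (F a b k v) := by
    intro a b k l θ v
    by_cases hfull : a = 0 ∧ b = Fin.last (n + 1)
    · obtain ⟨h1, h2⟩ := hfull
      subst h1; subst h2
      rw [hF_full0, hF_full0]
      exact ℓnat θ v
    · rw [hF_ne hfull, hF_ne hfull]
      exact D.Φ_natural _ _ _ _ _ _ _ θ v
  set H : SFunctor (DCat (n + 1)) X :=
    { obj := D.xobj
      map := fun {a b} k v => F a b k v
      map_id := fun a k => hsing a k _
      map_comp := fun {a b c} k f g => hcompF k f g
      map_natural := fun {a b} {k l} θ f => hnatF θ f } with hHdef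
  refine ⟨H, ?_, ?_⟩
  · refine SFunctor.ext'' D.hov ?_
    intro a b k v
    show ecast (D.hov a) (D.hov b) (p.map k (F a b k v)) = D.G.map k v
    by_cases hfull : a = (0 : Fin (n + 2)) ∧ b = Fin.last (n + 1)
    · obtain ⟨h1, h2⟩ := hfull
      subst h1; subst h2
      erw [hF_full0, ℓover v]
      exact ecast_cancel _ _ _ _ _
    · erw [hF_ne hfull]
      unfold Φint
      rw [D.Φ_over _ _ _ _ _ _ _ v (supp_intv a b v.1.down (le_refl _) (le_refl _) v)]
      exact ecast_cancel _ _ _ _ _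
  · -- the restriction property
    have hmono : ∀ {m' : SimplexCategory} (φ : m' ⟶ ⦋n + 1⦌) (hns)
        (hs : StrictMono φ.toOrderHom), SFunctor.comp' (DMap φ) H = D.fv φ hns := by
      intro m' φ hns hs
      refine SFunctor.ext'' (fun a₀ => (D.hobj φ hns a₀).symm) ?_
      intro a₀ b₀ k u
      show ecast _ _ (F (φ.toOrderHom a₀) (φ.toOrderHom b₀) k ((DMap φ).map k u)) =
        (D.fv φ hns).map k u
      by_cases hfull : φ.toOrderHom a₀ = 0 ∧ φ.toOrderHom b₀ = Fin.last (n + 1)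
      · erw [hF_full hfull]
        have hns2 : ¬∀ cc, ∃ x, φ.toOrderHom x = cc := hns
        rw [not_forall] at hns2
        obtain ⟨c0, hc0⟩ := hns2
        rw [not_exists] at hc0
        have hc0a : (0 : Fin (n + 2)) < c0 :=
          lt_of_le_of_ne (Fin.zero_le c0) (fun h => hc0 a₀ (hfull.1.trans h))
        have hc0b : c0 < Fin.last (n + 1) :=
          lt_of_le_of_ne (Fin.le_last c0) (fun h => hc0 b₀ (hfull.2.trans h.symm))
        have hv'c : Supp φ (ecast (X := DCat (n + 1)) hfull.1 hfull.2 ((DMap φ).map k u)) := by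
          intro c' hcc
          erw [ecast_coord]
          exact supp_push φ u _ hcc
        have hone : (ecast (X := DCat (n + 1)) hfull.1 hfull.2 ((DMap φ).map k u)).2
            ⟨c0, hc0a, hc0b⟩ = cst1 k := hv'c ⟨c0, hc0a, hc0b⟩ hc0
        have hmem : ∃ cc, (ecast (X := DCat (n + 1)) hfull.1 hfull.2
            ((DMap φ).map k u)).2 cc = cst1 k ∨ (ecast (X := DCat (n + 1)) hfull.1 hfull.2
            ((DMap φ).map k u)).2 cc = cst0 k := ⟨⟨c0, hc0a, hc0b⟩, Or.inl hone⟩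
        rw [show ℓ k (ecast (X := DCat (n + 1)) hfull.1 hfull.2 ((DMap φ).map k u)) =
          D.beta k ⟨_, hmem⟩ from ℓbeta ⟨_, hmem⟩]
        rw [D.beta_one ⟨_, hmem⟩ ⟨c0, hc0a, hc0b⟩ hone]
        rw [show D.ΦOne ⟨c0, hc0a, hc0b⟩
            (ecast (X := DCat (n + 1)) hfull.1 hfull.2 ((DMap φ).map k u)) =
          D.Φ φ hs hns a₀ b₀ hfull.1 hfull.2
            (ecast (X := DCat (n + 1)) hfull.1 hfull.2 ((DMap φ).map k u)) from
          D.Φ_eq_Φ (δf c0) φ (hs_δf c0) hs (ns_δf c0) hns 0 (Fin.last n) a₀ b₀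
            (δf_zero hc0a) (δf_last hc0b) hfull.1 hfull.2 _
            (supp_δf _ hone) hv'c]
        rw [D.Φ_ecast φ hs hns a₀ b₀ hfull.1 hfull.2 hfull.1 hfull.2 ((DMap φ).map k u)]
        rw [show D.Φ φ hs hns a₀ b₀ (hfull.1.trans hfull.1.symm) (hfull.2.trans hfull.2.symm)
            ((DMap φ).map k u) = D.Φ φ hs hns a₀ b₀ rfl rfl ((DMap φ).map k u) from rfl]
        rw [D.Φ_push φ hs hns a₀ b₀ u]
        exact eq_of_heq ((ecast_heq _ _ _).trans ((ecast_heq _ _ _).trans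
          ((ecast_heq _ _ _).trans (ecast_heq _ _ _))))
      · erw [hF_ne hfull]
        rw [show D.Φint (φ.toOrderHom a₀) (φ.toOrderHom b₀) ((DMap φ).map k u).1.down hfull
            ((DMap φ).map k u) = D.Φ φ hs hns a₀ b₀ rfl rfl ((DMap φ).map k u) from
          D.Φ_eq_Φ _ φ (hs_intv _ _ _) hs (ns_intv _ _ _ hfull) hns 0 (Fin.last _) a₀ b₀
            (intv_zero _ _ _) (intv_last _ _ _) rfl rfl ((DMap φ).map k u)
            (supp_intv _ _ _ (le_refl _) (le_refl _) _) (supp_push φ u)]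
        rw [D.Φ_push φ hs hns a₀ b₀ u]
        exact eq_of_heq ((ecast_heq _ _ _).trans (ecast_heq _ _ _))
    -- reduce the general case to the injective case
    have hrestr : ∀ (N : ℕ) (L : ℕ) (φ : (⦋L⦌ : SimplexCategory) ⟶ ⦋n + 1⦌) (hns),
        L ≤ N → SFunctor.comp' (DMap φ) H = D.fv φ hns := by
      intro N
      induction N with
      | zero =>
        intro L φ hns hlen
        have hL : L = 0 := Nat.le_zero.mp hlen
        subst hL
        refine hmono φ hns (fun i j hij => absurd (?_ : i = j) (ne_of_lt hij))
        have h1 : i.1 < 0 + 1 := i.isLt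
        have h2 : j.1 < 0 + 1 := j.isLt
        exact Fin.ext (by omega)
      | succ N ih =>
        intro L φ hns hlen
        by_cases hinj : Function.Injective φ.toOrderHom
        · exact hmono φ hns (φ.toOrderHom.monotone.strictMono_of_injective hinj)
        · cases L with
          | zero =>
            refine absurd (fun i j _ => (?_ : i = j)) hinj
            have h1 : i.1 < 0 + 1 := i.isLt
            have h2 : j.1 < 0 + 1 := j.isLt
            exact Fin.ext (by omega)
          | succ q =>
            obtain ⟨i, θ', hθ⟩ := SimplexCategory.eq_σ_comp_of_not_injective φ hinj
            subst hθ
            have hσsurj : Function.Surjective (SimplexCategory.σ i).toOrderHom := by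
              intro y
              refine ⟨(SimplexCategory.δ (Fin.castSucc i)).toOrderHom y, ?_⟩
              exact congrArg (fun (f : (⦋q⦌ : SimplexCategory) ⟶ ⦋q⦌) => f.toOrderHom y)
                SimplexCategory.δ_comp_σ_self
            have hnsθ' : ¬Function.Surjective θ'.toOrderHom := by
              intro hsurj
              refine hns ?_
              exact fun z => by
                obtain ⟨y, hy⟩ := hsurj z
                obtain ⟨x, hx⟩ := hσsurj y
                exact ⟨x, by rw [comp_app, hx, hy]⟩
            have hstep := ih q θ' hnsθ' (Nat.succ_le_succ_iff.mp hlen)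
            rw [DMap_comp]
            rw [show SFunctor.comp' (SFunctor.comp' (DMap (SimplexCategory.σ i)) (DMap θ')) H
              = SFunctor.comp' (DMap (SimplexCategory.σ i))
                  (SFunctor.comp' (DMap θ') H) from rfl]
            rw [hstep]
            exact (D.nat (SimplexCategory.σ i) θ' hnsθ' hns).symm
    intro m' φ hns
    have hmk : (⦋m'.len⦌ : SimplexCategory) = m' := SimplexCategory.mk_len m'
    obtain ⟨L, rfl⟩ : ∃ L : ℕ, (⦋L⦌ : SimplexCategory) = m' := ⟨m'.len, hmk⟩
    exact hrestr ((⦋L⦌ : SimplexCategory).len) _ φ hns (le_refl _)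

end LiftData
section ExistsH

open SimplexCategory CategoryTheory

lemma exists_H {X Y : SCat} {p : SFunctor X Y} (hp : rlpOf genCof (show X ⟶ Y from p))
    (N : ℕ) (D : LiftData N X Y p) :
    ∃ H : SFunctor (DCat N) X, SFunctor.comp' H p = D.G ∧
      ∀ {m' : SimplexCategory} (φ : m' ⟶ ⦋N⦌) (hns),
        SFunctor.comp' (DMap φ) H = D.fv φ hns := by
  match N with
  | Nat.succ n => exact D.exists_H_succ hp
  | 0 =>
    have hlift : HasLiftingProperty emptyToPt (show X ⟶ Y from p) :=
      hp emptyToPt (Or.inl ⟨Iso.refl _⟩)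
    let eX : emptySCat ⟶ X :=
      { obj := Empty.elim
        map := fun {x} => x.elim
        map_id := fun x => x.elim
        map_comp := fun {x} => x.elim
        map_natural := fun {x} => x.elim }
    let yG : ptSCat ⟶ Y :=
      { obj := fun _ => D.G.obj (0 : Fin 1)
        map := fun k _ => Y.id (D.G.obj (0 : Fin 1)) k
        map_id := fun _ _ => rfl
        map_comp := fun k _ _ => (Y.id_comp k _).symm
        map_natural := fun {x y} {k l} θ _ => (Y.id_map _ θ).symm }
    have hsq : CommSq eX emptyToPt (show X ⟶ Y from p) yG :=
      ⟨SFunctor.ext' (funext fun x => x.elim) (fun x => x.elim)⟩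
    haveI := hlift.sq_hasLift hsq
    set u := hsq.lift with hu
    have hfr : u ≫ (show X ⟶ Y from p) = yG := hsq.fac_right
    have hx : p.obj (u.obj PUnit.unit) = D.G.obj (0 : Fin 1) :=
      SFunctor.congr_obj hfr PUnit.unit
    refine ⟨{ obj := fun _ => u.obj PUnit.unit
              map := fun {a b} k _ => X.id (u.obj PUnit.unit) k
              map_id := fun _ _ => rfl
              map_comp := fun k _ _ => (X.id_comp k _).symm
              map_natural := fun θ _ => (X.id_map _ θ).symm }, ?_, ?_⟩
    · refine SFunctor.ext'' (fun a => ?_) ?_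
      · have ha : a = (0 : Fin 1) := Fin.ext (Nat.lt_one_iff.mp a.isLt)
        rw [ha]
        exact hx
      · intro a b k v
        have ha : a = (0 : Fin 1) := Fin.ext (Nat.lt_one_iff.mp a.isLt)
        have hb : b = (0 : Fin 1) := Fin.ext (Nat.lt_one_iff.mp b.isLt)
        subst ha; subst hb
        have hv : v = (DCat 0).id (0 : Fin 1) k := dhom_zero_subsingleton v _
        show ecast _ _ (p.map k (X.id (u.obj PUnit.unit) k)) = D.G.map k v
        erw [hv, D.G.map_id, p.map_id]
        exact ecast_id _ k
    · intro m' φ hns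
      refine absurd (fun y => ⟨0, ?_⟩) hns
      have h1 : (φ.toOrderHom 0).1 < 0 + 1 := (φ.toOrderHom 0).isLt
      have h2 : y.1 < 0 + 1 := y.isLt
      exact Fin.ext (by omega)

end ExistsH

/-- For any realization of the colimit-preserving functor
`Δ_𝔑 : sSet → sCat` with `Δ_𝔑(Δⁿ) = Δ_𝔑ⁿ` (equivalently, any left adjoint of the
homotopy coherent nerve `𝔑`), the map `Δ_𝔑(∂Δⁿ) → Δ_𝔑ⁿ` induced by the boundary
inclusion `∂Δⁿ → Δⁿ` is a cofibration in `sCat`. -/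
theorem DeltaN_boundary_inclusion_cofibration
    (F : SSet.{0} ⥤ SCat) (adj : F ⊣ hcNerve) (n : ℕ) :
    Cofib (F.map ∂Δ[n].ι) := by
  intro X Y p hp
  rw [adj.hasLiftingProperty_iff]
  constructor
  intro f g sq
  -- Package the data of the square as a `LiftData`.
  set D : LiftData n X Y p :=
    { G := g.app (op (SimplexCategory.mk n)) ((SSet.stdSimplex.objEquiv (n := SimplexCategory.mk n) (m := (op (SimplexCategory.mk n)))).symm (𝟙 (SimplexCategory.mk n)))
      fv := fun {m'} φ hns =>
        f.app (op m') ⟨(SSet.stdSimplex.objEquiv (n := SimplexCategory.mk n) (m := (op m'))).symm φ, hns⟩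
      nat := by
        intro l' m' θ φ h h'
        have h1 : (∂Δ[n] : SSet.{0}).map θ.op
            ⟨(SSet.stdSimplex.objEquiv (n := SimplexCategory.mk n) (m := (op m'))).symm φ, h⟩ =
            ⟨(SSet.stdSimplex.objEquiv (n := SimplexCategory.mk n) (m := (op l'))).symm (θ ≫ φ), h'⟩ :=
          Subtype.ext rfl
        have h2 := ConcreteCategory.congr_hom (f.naturality θ.op)
          ⟨(SSet.stdSimplex.objEquiv (n := SimplexCategory.mk n) (m := (op m'))).symm φ, h⟩
        exact (congrArg (f.app (op l')) h1).symm.trans h2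
      over' := by
        intro m' φ h
        have h2 := ConcreteCategory.congr_hom (g.naturality φ.op)
          ((SSet.stdSimplex.objEquiv (n := SimplexCategory.mk n) (m := (op (SimplexCategory.mk n)))).symm (𝟙 (SimplexCategory.mk n)))
        have h3 : (SSet.stdSimplex.obj (SimplexCategory.mk n)).map φ.op
            ((SSet.stdSimplex.objEquiv (n := SimplexCategory.mk n) (m := (op (SimplexCategory.mk n)))).symm (𝟙 (SimplexCategory.mk n))) =
            (SSet.stdSimplex.objEquiv (n := SimplexCategory.mk n) (m := (op m'))).symm φ := by
          show ULift.up (φ ≫ 𝟙 (SimplexCategory.mk n)) = ULift.up φ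
          rw [Category.comp_id]
        have h4 := ConcreteCategory.congr_hom (congrArg (fun (η : (∂Δ[n] : SSet.{0}) ⟶ hcNerve.obj Y) =>
          η.app (op m')) sq.w)
          ⟨(SSet.stdSimplex.objEquiv (n := SimplexCategory.mk n) (m := (op m'))).symm φ, h⟩
        exact h4.trans ((congrArg (g.app (op m')) h3.symm).trans h2) }
    with hD
  obtain ⟨H, hover, hrestr⟩ := exists_H hp n D
  refine CommSq.HasLift.mk' ⟨?_, ?_, ?_⟩
  -- the lift
  · exact
      { app := fun k => ↾fun s =>
          SFunctor.comp' (DMap ((SSet.stdSimplex.objEquiv (n := SimplexCategory.mk n) (m := k)) s)) H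
        naturality := by
          intro k l ψ
          ext s
          show SFunctor.comp' (DMap (ψ.unop ≫
            (SSet.stdSimplex.objEquiv (n := SimplexCategory.mk n) (m := k)) s)) H = _
          rw [DMap_comp]
          rfl }
  · refine NatTrans.ext ?_
    funext k; ext s
    refine (hrestr ((SSet.stdSimplex.objEquiv (n := SimplexCategory.mk n) (m := k)) s.1) s.2).trans ?_
    exact congrArg (f.app k) (Subtype.ext rfl)
  · refine NatTrans.ext ?_
    funext k; ext s
    have h2 := ConcreteCategory.congr_hom (g.naturality ((SSet.stdSimplex.objEquiv (n := SimplexCategory.mk n) (m := k)) s).op)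
      ((SSet.stdSimplex.objEquiv (n := SimplexCategory.mk n) (m := (op (SimplexCategory.mk n)))).symm (𝟙 (SimplexCategory.mk n)))
    have h3 : (SSet.stdSimplex.obj (SimplexCategory.mk n)).map
        ((SSet.stdSimplex.objEquiv (n := SimplexCategory.mk n) (m := k)) s).op
        ((SSet.stdSimplex.objEquiv (n := SimplexCategory.mk n) (m := (op (SimplexCategory.mk n)))).symm (𝟙 (SimplexCategory.mk n))) = s := by
      show ULift.up ((SSet.stdSimplex.objEquiv (n := SimplexCategory.mk n) (m := k)) s ≫ 𝟙 (SimplexCategory.mk n)) = s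
      rw [Category.comp_id]
      rfl
    show SFunctor.comp' (SFunctor.comp'
      (DMap ((SSet.stdSimplex.objEquiv (n := SimplexCategory.mk n) (m := k)) s)) H) p = g.app k s
    rw [show SFunctor.comp' (SFunctor.comp'
        (DMap ((SSet.stdSimplex.objEquiv (n := SimplexCategory.mk n) (m := k)) s)) H) p =
      SFunctor.comp' (DMap ((SSet.stdSimplex.objEquiv (n := SimplexCategory.mk n) (m := k)) s))
        (SFunctor.comp' H p) from rfl]
    rw [hover]
    exact h2.symm.trans (congrArg (g.app k) h3)
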